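/- arXiv:1609.08219 — 3 statements merged into one kernel-verified Lean document; each statement's English description precedes it below -/
import Mathlib

section
/- Let (X, T) be a dynamical system with G a locally compact abelian group acting continuously on the compact space X, let f ∈ C(X) and ω ∈ X with dense orbit {T^t ω : t ∈ G} in X, and define g : G → ℂ by g(t) = f(T^t ω). If g is weakly almost periodic on G, then f ∈ WAP(X). -/
open Filter Topology BoundedContinuousFunction

variable {G X : Type*}

/-- The translate `T^s h` of a bounded continuous function, `(T^s h)(x) = h(x - s)`. -/
noncomputable def bcfTranslate [UniformSpace G] [AddCommGroup G] [IsUniformAddGroup G]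
    (h : G →ᵇ ℂ) (s : G) : G →ᵇ ℂ :=
  h.compContinuous ⟨fun x => x - s, by continuity⟩

/-- A function `h : G → ℂ` is weakly almost periodic: it is bounded and uniformly
continuous, and its orbit under translations is relatively compact in the weak topology
of the Banach space `C_u(G) ⊆ (G →ᵇ ℂ)` with sup norm. -/
def IsWapFn [UniformSpace G] [AddCommGroup G] [IsUniformAddGroup G] (h : G → ℂ) : Prop :=
  UniformContinuous h ∧ ∃ hb : G →ᵇ ℂ, (∀ x, hb x = h x) ∧
    IsCompact (closure (toWeakSpace ℂ (G →ᵇ ℂ) ''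
      {g : G →ᵇ ℂ | ∃ s : G, g = bcfTranslate hb s}))

/-- A continuous function on compact `X` is weakly almost periodic for the `G`-action if
its orbit under translations is relatively compact in the weak topology of `C(X, ℂ)`. -/
def IsWapCX [AddGroup G] [TopologicalSpace G] [TopologicalSpace X] [CompactSpace X]
    [AddAction G X] [ContinuousVAdd G X] (f : C(X, ℂ)) : Prop :=
  IsCompact (closure (toWeakSpace ℂ C(X, ℂ) ''
    {h : C(X, ℂ) | ∃ t : G, h = f.comp ⟨fun x => t +ᵥ x, continuous_const_vadd t⟩}))

section AuxWeak

variable {E F : Type*} [NormedAddCommGroup E] [NormedSpace ℂ E]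
    [NormedAddCommGroup F] [NormedSpace ℂ F]

/-- Every continuous functional on `E` factors through an isometric embedding `R`. -/
theorem auxWap_exists_extension (R : E →ₗᵢ[ℂ] F) (ψ : E →L[ℂ] ℂ) :
    ∃ φ : F →L[ℂ] ℂ, ∀ x, φ (R x) = ψ x := by
  let e := R.equivRange
  let f : LinearMap.range R.toLinearMap →L[ℂ] ℂ :=
    { toLinearMap := ψ.toLinearMap.comp (e.symm.toLinearEquiv : _ →ₗ[ℂ] E)
      cont := ψ.cont.comp e.symm.continuous }
  obtain ⟨φ, hφ, -⟩ := exists_extension_norm_eq (LinearMap.range R.toLinearMap) f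
  refine ⟨φ, fun x => ?_⟩
  have h1 := hφ (e x)
  have h2 : ((e x : LinearMap.range R.toLinearMap) : F) = R x := rfl
  rw [h2] at h1
  rw [h1]
  show ψ (e.symm (e x)) = ψ x
  rw [e.symm_apply_apply]

theorem auxWap_isInducing (R : E →ₗᵢ[ℂ] F) :
    Topology.IsInducing
      (⇑(WeakSpace.map R.toContinuousLinearMap) : WeakSpace ℂ E → WeakSpace ℂ F) := by
  choose Φ hΦ using auxWap_exists_extension R
  constructor
  refine le_antisymm
    (continuous_iff_le_induced.mp (WeakSpace.map R.toContinuousLinearMap).continuous) ?_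
  let Rw : WeakSpace ℂ E → WeakSpace ℂ F := ⇑(WeakSpace.map R.toContinuousLinearMap)
  let evE : WeakSpace ℂ E → ((E →L[ℂ] ℂ) → ℂ) := fun x ψ => ψ x
  let evF : WeakSpace ℂ F → ((F →L[ℂ] ℂ) → ℂ) := fun y φ => φ y
  let reindex : ((F →L[ℂ] ℂ) → ℂ) → ((E →L[ℂ] ℂ) → ℂ) := fun d ψ => d (Φ ψ)
  have hre : Continuous reindex := continuous_pi fun ψ => continuous_apply (Φ ψ)
  have hEF : evE = reindex ∘ (evF ∘ Rw) := by
    funext x ψ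
    exact (hΦ ψ x).symm
  have htF : (WeakBilin.instTopologicalSpace _ : TopologicalSpace (WeakSpace ℂ F))
      = TopologicalSpace.induced evF Pi.topologicalSpace := rfl
  have htE : (WeakBilin.instTopologicalSpace _ : TopologicalSpace (WeakSpace ℂ E))
      = TopologicalSpace.induced evE Pi.topologicalSpace := rfl
  calc TopologicalSpace.induced Rw (WeakBilin.instTopologicalSpace _)
      = TopologicalSpace.induced (evF ∘ Rw) Pi.topologicalSpace := by
        rw [htF, induced_compose]
    _ ≤ TopologicalSpace.induced (evF ∘ Rw)
        (TopologicalSpace.induced reindex Pi.topologicalSpace) :=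
        induced_mono (continuous_iff_le_induced.mp hre)
    _ = TopologicalSpace.induced evE Pi.topologicalSpace := by
        rw [induced_compose, ← hEF]
    _ = _ := by exact htE.symm

theorem auxWap_image_toWeakSpace (s : Set F) : toWeakSpace ℂ F '' s = s := by
  change (fun x : F => x) '' s = s
  exact Set.image_id' s

theorem auxWap_isClosedEmbedding [CompleteSpace E] (R : E →ₗᵢ[ℂ] F) :
    Topology.IsClosedEmbedding (⇑(WeakSpace.map R.toContinuousLinearMap) :
      WeakSpace ℂ E → WeakSpace ℂ F) := by
  refine ⟨⟨auxWap_isInducing R, ?_⟩, ?_⟩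
  · intro x y hxy
    exact R.injective hxy
  · have hconv : Convex ℝ (Set.range ⇑R.toContinuousLinearMap) := by
      have := ((LinearMap.range R.toLinearMap).restrictScalars ℝ).convex
      simpa [LinearMap.coe_range] using this
    have hcl : IsClosed (Set.range ⇑R.toContinuousLinearMap) := by
      have := R.isometry.isClosedEmbedding.isClosed_range
      simpa using this
    have h1 := hconv.toWeakSpace_closure (𝕜 := ℂ)
    rw [hcl.closure_eq, auxWap_image_toWeakSpace] at h1
    have h2 : Set.range (⇑(WeakSpace.map R.toContinuousLinearMap) :
        WeakSpace ℂ E → WeakSpace ℂ F) = Set.range ⇑R.toContinuousLinearMap := rfl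
    rw [h2, h1]
    exact isClosed_closure

end AuxWeak

/-- If `G` is an LCA group acting continuously on the compact space `X`,
`ω ∈ X` has dense orbit, `f ∈ C(X)` and `g(t) = f(T^t ω)` is weakly almost periodic on
`G`, then `f ∈ WAP(X)`. -/
theorem isWapCX_of_orbitMap_isWapFn [UniformSpace G] [AddCommGroup G] [IsUniformAddGroup G]
    [LocallyCompactSpace G] [TopologicalSpace X] [CompactSpace X]
    [AddAction G X] [ContinuousVAdd G X]
    (f : C(X, ℂ)) (ω : X) (hdense : Dense {x : X | ∃ t : G, x = t +ᵥ ω})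
    (hg : IsWapFn fun t : G => f (t +ᵥ ω)) :
    IsWapCX (G := G) f := by
  obtain ⟨-, hb, hbg, hK⟩ := hg
  have horb : Continuous fun t : G => t +ᵥ ω := continuous_id.vadd continuous_const
  have hRle : ∀ (h : C(X, ℂ)) (t : G), ‖h (t +ᵥ ω)‖ ≤ ‖h‖ := fun h t =>
    h.norm_coe_le_norm _
  let Rf : C(X, ℂ) → (G →ᵇ ℂ) := fun h =>
    BoundedContinuousFunction.ofNormedAddCommGroup (fun t => h (t +ᵥ ω))
      (h.continuous.comp horb) ‖h‖ (hRle h)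
  have hnorm : ∀ h : C(X, ℂ), ‖Rf h‖ = ‖h‖ := by
    intro h
    refine le_antisymm (norm_ofNormedAddCommGroup_le _ (norm_nonneg h) (hRle h)) ?_
    rw [ContinuousMap.norm_le _ (norm_nonneg (Rf h))]
    intro x
    have hclosed : IsClosed {x : X | ‖h x‖ ≤ ‖Rf h‖} :=
      isClosed_le h.continuous.norm continuous_const
    have hsub : {x : X | ∃ t : G, x = t +ᵥ ω} ⊆ {x : X | ‖h x‖ ≤ ‖Rf h‖} := by
      rintro x ⟨t, rfl⟩
      exact (Rf h).norm_coe_le_norm t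
    have hcls := closure_minimal hsub hclosed
    rw [hdense.closure_eq] at hcls
    exact hcls (Set.mem_univ x)
  let R : C(X, ℂ) →ₗᵢ[ℂ] (G →ᵇ ℂ) :=
    { toFun := Rf
      map_add' := fun h h' => by ext t; simp [Rf]
      map_smul' := fun c h => by ext t; simp [Rf]
      norm_map' := hnorm }
  have hRS : ∀ t : G,
      R.toContinuousLinearMap (f.comp ⟨fun x => t +ᵥ x, continuous_const_vadd t⟩)
        = bcfTranslate hb (-t) := by
    intro t
    ext s
    show f (t +ᵥ (s +ᵥ ω)) = hb (s - -t)
    rw [sub_neg_eq_add, hbg]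
    rw [← add_vadd, add_comm t s]
  have hCE := auxWap_isClosedEmbedding R
  rw [IsWapCX]
  set Sf := {h : C(X, ℂ) | ∃ t : G, h = f.comp ⟨fun x => t +ᵥ x, continuous_const_vadd t⟩}
    with hSf
  set Shb := {g : G →ᵇ ℂ | ∃ s : G, g = bcfTranslate hb s} with hShb
  have hsub2 : ⇑(WeakSpace.map R.toContinuousLinearMap) '' (toWeakSpace ℂ C(X, ℂ) '' Sf)
      ⊆ toWeakSpace ℂ (G →ᵇ ℂ) '' Shb := by
    rintro - ⟨-, ⟨h, ⟨t, rfl⟩, rfl⟩, rfl⟩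
    exact ⟨bcfTranslate hb (-t), ⟨-t, rfl⟩, congrArg (toWeakSpace ℂ (G →ᵇ ℂ)) (hRS t).symm⟩
  have h2 : IsCompact (closure (⇑(WeakSpace.map R.toContinuousLinearMap) ''
      (toWeakSpace ℂ C(X, ℂ) '' Sf))) :=
    hK.of_isClosed_subset isClosed_closure (closure_mono hsub2)
  have h3 := hCE.closure_image_eq (toWeakSpace ℂ C(X, ℂ) '' Sf)
  rw [h3] at h2
  exact (auxWap_isInducing R).isCompact_iff.mpr h2
end

section
/- Let G be a locally compact abelian group and μ a null weakly almost periodic measure on G. Then every element of the hull X(μ) (vague orbit closure of μ) is a null weakly almost periodic measure. -/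
open Filter Topology MeasureTheory BoundedContinuousFunction
open scoped Pointwise

variable {G : Type*}

/-- Continuous compactly supported test functions. -/
def IsCc [TopologicalSpace G] (c : G → ℂ) : Prop := Continuous c ∧ HasCompactSupport c

/-- A Bohr (strongly) almost periodic function on `G`: bounded, uniformly continuous,
with norm-relatively compact translation orbit. -/
def IsSapFn [UniformSpace G] [AddCommGroup G] [IsUniformAddGroup G] (h : G → ℂ) : Prop :=
  UniformContinuous h ∧ ∃ hb : G →ᵇ ℂ, (∀ x, hb x = h x) ∧
    IsCompact (closure {g : G →ᵇ ℂ | ∃ s : G, g = bcfTranslate hb s})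

/-- A Følner sequence for the Haar measure `θ`. -/
def IsFolner [TopologicalSpace G] [AddCommGroup G] [MeasurableSpace G]
    (θ : Measure G) (A : ℕ → Set G) : Prop :=
  (∀ n, IsCompact (A n)) ∧
    ∀ x : G, Tendsto (fun n => θ (symmDiff (A n) ((fun t => x + t) '' A n)) / θ (A n))
      atTop (𝓝 0)

/-- `m` is the mean of `h`: for every Følner sequence `Aₙ`,
`(1/θ(Aₙ)) ∫_{x+Aₙ} h → m` uniformly in `x`. -/
def IsMeanFn [TopologicalSpace G] [AddCommGroup G] [MeasurableSpace G]
    (θ : Measure G) (h : G → ℂ) (m : ℂ) : Prop :=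
  ∀ A : ℕ → Set G, IsFolner θ A →
    TendstoUniformly
      (fun n x => ((θ (A n)).toReal)⁻¹ • ∫ t in (fun s => x + s) '' A n, h t ∂θ)
      (fun _ => m) atTop

/-- A measure, viewed as a functional on test functions. -/
abbrev MeasF (G : Type*) := (G → ℂ) → ℂ

/-- The convolution `(c ∗ μ)(x) = ∫ c(x - t) dμ(t)` of a test function with a measure. -/
def convF [AddCommGroup G] (c : G → ℂ) (μ : MeasF G) : G → ℂ := fun x => μ fun t => c (x - t)

/-- `μ` is a (complex Radon) measure: a linear functional on `C_c(G)` which is continuous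
in the inductive limit topology (bounded on each `C(G:K)`). -/
def IsRadonF [TopologicalSpace G] (μ : MeasF G) : Prop :=
  (∀ f g : G → ℂ, IsCc f → IsCc g → μ (f + g) = μ f + μ g) ∧
  (∀ (a : ℂ) (f : G → ℂ), IsCc f → μ (a • f) = a * μ f) ∧
  (∀ K : Set G, IsCompact K → ∃ C : ℝ, ∀ f : G → ℂ, Continuous f → tsupport f ⊆ K →
    ‖μ f‖ ≤ C * ⨆ x, ‖f x‖)

/-- `μ` is a translation bounded measure: a Radon measure with `c ∗ μ ∈ C_u(G)`
(bounded and uniformly continuous) for every test function `c`. -/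
def IsTbF [UniformSpace G] [AddCommGroup G] [IsUniformAddGroup G] (μ : MeasF G) : Prop :=
  IsRadonF μ ∧ ∀ c : G → ℂ, IsCc c →
    UniformContinuous (convF c μ) ∧ ∃ C : ℝ, ∀ x, ‖convF c μ x‖ ≤ C

/-- A weakly almost periodic measure: `c ∗ μ ∈ WAP(G)` for all test functions `c`. -/
def IsWapM [UniformSpace G] [AddCommGroup G] [IsUniformAddGroup G] (μ : MeasF G) : Prop :=
  IsTbF μ ∧ ∀ c : G → ℂ, IsCc c → IsWapFn (convF c μ)

/-- A strongly almost periodic measure: `c ∗ μ` is Bohr almost periodic for all `c`. -/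
def IsSapM [UniformSpace G] [AddCommGroup G] [IsUniformAddGroup G] (μ : MeasF G) : Prop :=
  IsTbF μ ∧ ∀ c : G → ℂ, IsCc c → IsSapFn (convF c μ)

/-- A null weakly almost periodic measure: weakly almost periodic with
`M(|c ∗ μ|) = 0` for all test functions `c`. -/
def IsWap0M [UniformSpace G] [AddCommGroup G] [IsUniformAddGroup G] [MeasurableSpace G]
    (θ : Measure G) (μ : MeasF G) : Prop :=
  IsWapM μ ∧ ∀ c : G → ℂ, IsCc c →
    IsMeanFn θ (fun x => (‖convF c μ x‖ : ℂ)) 0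

/-- The translate `T^t μ = δ_t ∗ μ` of a measure. -/
def translateM [AddCommGroup G] (t : G) (μ : MeasF G) : MeasF G :=
  fun f => μ fun x => f (t + x)

/-- The vague topology on measures: the weak-* topology from `C_c(G)`. -/
noncomputable def vagueTop [TopologicalSpace G] : TopologicalSpace (MeasF G) :=
  TopologicalSpace.induced (fun μ => fun c : {c : G → ℂ // IsCc c} => μ c.1)
    inferInstance

/-- The hull `X(μ)`: the vague closure of the translation orbit of `μ`. -/
def hullM [TopologicalSpace G] [AddCommGroup G] (μ : MeasF G) : Set (MeasF G) :=
  @closure _ vagueTop {ν | ∃ t : G, ν = translateM t μ}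

/-! ### Auxiliary lemmas -/

section Aux

variable [UniformSpace G] [AddCommGroup G] [IsUniformAddGroup G]

lemma IsCc.comp_sub {c : G → ℂ} (hc : IsCc c) (x : G) : IsCc fun s => c (x - s) :=
  ⟨hc.1.comp (continuous_sub_left x), hc.2.comp_homeomorph (Homeomorph.subLeft x)⟩

lemma IsCc.comp_add {c : G → ℂ} (hc : IsCc c) (t : G) : IsCc fun s => c (t + s) :=
  ⟨hc.1.comp (continuous_add_left t), hc.2.comp_homeomorph (Homeomorph.addLeft t)⟩

lemma IsCc.comp_neg {c : G → ℂ} (hc : IsCc c) : IsCc fun s => c (-s) :=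
  ⟨hc.1.comp continuous_neg, hc.2.comp_homeomorph (Homeomorph.neg G)⟩

lemma IsCc.addF {f g : G → ℂ} (hf : IsCc f) (hg : IsCc g) : IsCc (f + g) :=
  ⟨hf.1.add hg.1, hf.2.add hg.2⟩

lemma IsCc.smulF (a : ℂ) {f : G → ℂ} (hf : IsCc f) : IsCc (a • f) :=
  ⟨hf.1.const_smul a, hf.2.smul_left⟩

lemma convF_translateM (μ : MeasF G) (c : G → ℂ) (t x : G) :
    convF c (translateM t μ) x = convF c μ (x - t) :=
  congrArg μ (funext fun s => by show c (x - (t + s)) = c (x - t - s); rw [sub_add_eq_sub_sub])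

/-- The filter of translates of `μ` approaching `ν`. -/
noncomputable def hullFilter (μ ν : MeasF G) : Filter (MeasF G) :=
  @nhdsWithin _ vagueTop ν {ρ | ∃ t : G, ρ = translateM t μ}

lemma hullFilter_neBot {μ ν : MeasF G} (hν : ν ∈ hullM μ) : (hullFilter μ ν).NeBot :=
  (@mem_closure_iff_nhdsWithin_neBot (MeasF G) vagueTop _ _).mp hν

lemma hullFilter_orbit (μ ν : MeasF G) :
    ∀ᶠ ρ in hullFilter μ ν, ∃ t : G, ρ = translateM t μ :=
  @self_mem_nhdsWithin (MeasF G) vagueTop ν _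

lemma tendsto_eval (μ ν : MeasF G) {c : G → ℂ} (hc : IsCc c) :
    Tendsto (fun ρ : MeasF G => ρ c) (hullFilter μ ν) (𝓝 (ν c)) := by
  have h2 : @Continuous (MeasF G) ({c : G → ℂ // IsCc c} → ℂ) vagueTop _
      (fun ρ => fun c' : {c : G → ℂ // IsCc c} => ρ c'.1) := continuous_induced_dom
  have h1 : @Continuous (MeasF G) ℂ vagueTop _ (fun ρ : MeasF G => ρ c) :=
    @Continuous.comp _ _ _ vagueTop _ _ _ _
      (continuous_apply (⟨c, hc⟩ : {c : G → ℂ // IsCc c})) h2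
  have h3 := @Continuous.tendsto _ _ vagueTop _ _ h1 ν
  exact h3.mono_left (@nhdsWithin_le_nhds _ vagueTop _ _)

lemma tendsto_convF (μ ν : MeasF G) {c : G → ℂ} (hc : IsCc c) (x : G) :
    Tendsto (fun ρ : MeasF G => convF c ρ x) (hullFilter μ ν) (𝓝 (convF c ν x)) :=
  tendsto_eval μ ν (hc.comp_sub x)

lemma hullFilter_translate (μ ν : MeasF G) (c : G → ℂ) :
    ∀ᶠ ρ in hullFilter μ ν, ∃ t : G, ∀ x, convF c ρ x = convF c μ (x - t) :=
  (hullFilter_orbit μ ν).mono fun ρ ⟨t, ht⟩ => ⟨t, fun x => ht ▸ convF_translateM μ c t x⟩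

lemma uniformContinuous_iff' (g : G → ℂ) :
    UniformContinuous g ↔
      ∀ ε > 0, ∃ W ∈ 𝓝 (0 : G), ∀ a b : G, b - a ∈ W → dist (g a) (g b) < ε := by
  constructor
  · intro h ε hε
    have h2 := (Metric.uniformity_basis_dist.tendsto_right_iff).mp h ε hε
    rw [uniformity_eq_comap_nhds_zero G, Filter.eventually_comap] at h2
    refine ⟨{w | ∀ p : G × G, p.2 - p.1 = w → dist (g p.1) (g p.2) < ε}, h2, ?_⟩
    intro a b hab
    exact hab (a, b) rfl
  · intro h
    rw [UniformContinuous, Metric.uniformity_basis_dist.tendsto_right_iff]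
    intro ε hε
    obtain ⟨W, hW, hprop⟩ := h ε hε
    rw [uniformity_eq_comap_nhds_zero G]
    refine Filter.eventually_comap.mpr (Filter.eventually_of_mem hW ?_)
    intro w hw p hp
    exact hprop p.1 p.2 (by rw [hp]; exact hw)

end Aux
section Aux2

variable [UniformSpace G] [AddCommGroup G] [IsUniformAddGroup G]
variable {μ ν : MeasF G} {c : G → ℂ}

lemma convF_hull_bound (hμtb : IsTbF μ) (hν : ν ∈ hullM μ) (hc : IsCc c) :
    ∃ C : ℝ, (∀ x, ‖convF c μ x‖ ≤ C) ∧ (∀ x, ‖convF c ν x‖ ≤ C) := by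
  haveI := hullFilter_neBot hν
  obtain ⟨C, hC⟩ := (hμtb.2 c hc).2
  refine ⟨C, hC, fun x => ?_⟩
  refine le_of_tendsto (tendsto_convF μ ν hc x).norm ?_
  filter_upwards [hullFilter_translate μ ν c] with ρ ⟨t, ht⟩
  rw [ht x]; exact hC _

lemma convF_hull_uc (hμtb : IsTbF μ) (hν : ν ∈ hullM μ) (hc : IsCc c) :
    UniformContinuous (convF c ν) := by
  haveI := hullFilter_neBot hν
  rw [uniformContinuous_iff']
  intro ε hε
  obtain ⟨W, hW, hWp⟩ := (uniformContinuous_iff' _).mp (hμtb.2 c hc).1 (ε / 2) (by linarith)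
  refine ⟨W, hW, fun a b hab => ?_⟩
  have hlim : Tendsto (fun ρ : MeasF G => dist (convF c ρ a) (convF c ρ b))
      (hullFilter μ ν) (𝓝 (dist (convF c ν a) (convF c ν b))) :=
    (tendsto_convF μ ν hc a).dist (tendsto_convF μ ν hc b)
  have hev : ∀ᶠ ρ in hullFilter μ ν,
      dist (convF c ρ a) (convF c ρ b) ≤ ε / 2 := by
    filter_upwards [hullFilter_translate μ ν c] with ρ ⟨t, ht⟩
    rw [ht a, ht b]
    exact le_of_lt (hWp (a - t) (b - t) (by rwa [sub_sub_sub_cancel_right]))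
  exact lt_of_le_of_lt (le_of_tendsto hlim hev) (by linarith)

/-- On any compact set, `convF c ν` is uniformly approximated by a translate of
`convF c μ`. -/
lemma exists_translate_close (hμtb : IsTbF μ) (hν : ν ∈ hullM μ) (hc : IsCc c)
    {Q : Set G} (hQ : IsCompact Q) {δ : ℝ} (hδ : 0 < δ) :
    ∃ t : G, ∀ q ∈ Q, dist (convF c ν q) (convF c μ (q - t)) ≤ δ := by
  haveI := hullFilter_neBot hν
  obtain ⟨W, hW, hWp⟩ := (uniformContinuous_iff' _).mp (hμtb.2 c hc).1 (δ / 4)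
    (by linarith)
  -- uniform continuity of `convF c ν` with the same modulus
  have hνuc : ∀ a b : G, b - a ∈ W → dist (convF c ν a) (convF c ν b) ≤ δ / 4 := by
    intro a b hab
    have hlim : Tendsto (fun ρ : MeasF G => dist (convF c ρ a) (convF c ρ b))
        (hullFilter μ ν) (𝓝 (dist (convF c ν a) (convF c ν b))) :=
      (tendsto_convF μ ν hc a).dist (tendsto_convF μ ν hc b)
    refine le_of_tendsto hlim ?_
    filter_upwards [hullFilter_translate μ ν c] with ρ ⟨t, ht⟩
    rw [ht a, ht b]
    exact le_of_lt (hWp (a - t) (b - t) (by rwa [sub_sub_sub_cancel_right]))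
  -- finite cover of Q by W-neighborhoods
  have hUnb : ∀ q : G, q ∈ Q → {y | y - q ∈ W} ∈ 𝓝 q := by
    intro q _
    have h1 : Tendsto (fun y : G => y - q) (𝓝 q) (𝓝 0) := by
      simpa using ((continuous_sub_right q).tendsto q)
    exact h1 hW
  obtain ⟨T, hTQ, hTcov⟩ := hQ.elim_nhds_subcover (fun q => {y | y - q ∈ W}) hUnb
  -- choose a translate close at the finitely many centers
  have hev : ∀ᶠ ρ in hullFilter μ ν,
      (∃ t : G, ∀ x, convF c ρ x = convF c μ (x - t)) ∧
        ∀ q ∈ T, dist (convF c ν q) (convF c ρ q) < δ / 4 := by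
    refine (hullFilter_translate μ ν c).and ?_
    rw [Filter.eventually_all_finset]
    intro q _
    have hlim : Tendsto (fun ρ : MeasF G => dist (convF c ν q) (convF c ρ q))
        (hullFilter μ ν) (𝓝 (dist (convF c ν q) (convF c ν q))) :=
      tendsto_const_nhds.dist (tendsto_convF μ ν hc q)
    rw [dist_self] at hlim
    exact hlim.eventually_lt_const (by linarith)
  obtain ⟨ρ, ⟨t, hρt⟩, hρq⟩ := hev.exists
  refine ⟨t, fun q hq => ?_⟩
  obtain ⟨i, hiT, hqi⟩ := Set.mem_iUnion₂.mp (hTcov hq)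
  have h1 : dist (convF c ν q) (convF c ν i) ≤ δ / 4 := by
    rw [dist_comm]; exact hνuc i q hqi
  have h2 : dist (convF c ν i) (convF c ρ i) ≤ δ / 4 := le_of_lt (hρq i hiT)
  have h3 : dist (convF c ρ i) (convF c μ (q - t)) ≤ δ / 4 := by
    rw [hρt i]
    exact le_of_lt (hWp (i - t) (q - t) (by rwa [sub_sub_sub_cancel_right]))
  calc dist (convF c ν q) (convF c μ (q - t))
      ≤ dist (convF c ν q) (convF c ν i) + dist (convF c ν i) (convF c ρ i)
        + dist (convF c ρ i) (convF c μ (q - t)) := dist_triangle4 _ _ _ _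
    _ ≤ δ / 4 + δ / 4 + δ / 4 := by gcongr
    _ ≤ δ := by linarith

end Aux2
section Aux3

variable [UniformSpace G] [AddCommGroup G] [IsUniformAddGroup G]
variable {μ ν : MeasF G}

lemma translateM_add (hμ : IsRadonF μ) (t : G) {f g : G → ℂ} (hf : IsCc f) (hg : IsCc g) :
    translateM t μ (f + g) = translateM t μ f + translateM t μ g := by
  show μ (fun s => (f + g) (t + s)) = μ (fun s => f (t + s)) + μ (fun s => g (t + s))
  have h1 : (fun s => (f + g) (t + s))
      = (fun s => f (t + s)) + (fun s => g (t + s)) := rfl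
  rw [h1]
  exact hμ.1 _ _ (hf.comp_add t) (hg.comp_add t)

lemma translateM_smul (hμ : IsRadonF μ) (t : G) (a : ℂ) {f : G → ℂ} (hf : IsCc f) :
    translateM t μ (a • f) = a * translateM t μ f := by
  show μ (fun s => (a • f) (t + s)) = a * μ (fun s => f (t + s))
  have h1 : (fun s => (a • f) (t + s)) = a • (fun s => f (t + s)) := rfl
  rw [h1]
  exact hμ.2.1 a _ (hf.comp_add t)

lemma hull_add (hμr : IsRadonF μ) (hν : ν ∈ hullM μ) {f g : G → ℂ}
    (hf : IsCc f) (hg : IsCc g) : ν (f + g) = ν f + ν g := by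
  haveI := hullFilter_neBot hν
  have h1 : Tendsto (fun ρ : MeasF G => ρ (f + g)) (hullFilter μ ν) (𝓝 (ν f + ν g)) := by
    refine Tendsto.congr' ?_ ((tendsto_eval μ ν hf).add (tendsto_eval μ ν hg))
    filter_upwards [hullFilter_orbit μ ν] with ρ ⟨t, ht⟩
    rw [ht]
    exact (translateM_add hμr t hf hg).symm
  exact tendsto_nhds_unique (tendsto_eval μ ν (hf.addF hg)) h1

lemma hull_smul (hμr : IsRadonF μ) (hν : ν ∈ hullM μ) (a : ℂ) {f : G → ℂ}
    (hf : IsCc f) : ν (a • f) = a * ν f := by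
  haveI := hullFilter_neBot hν
  have h1 : Tendsto (fun ρ : MeasF G => ρ (a • f)) (hullFilter μ ν) (𝓝 (a * ν f)) := by
    refine Tendsto.congr' ?_ ((tendsto_eval μ ν hf).const_mul a)
    filter_upwards [hullFilter_orbit μ ν] with ρ ⟨t, ht⟩
    rw [ht]
    exact (translateM_smul hμr t a hf).symm
  exact tendsto_nhds_unique (tendsto_eval μ ν (hf.smulF a)) h1

lemma hull_bound (hμtb : IsTbF μ) (hν : ν ∈ hullM μ) {K : Set G} (hK : IsCompact K) :
    ∃ C : ℝ, ∀ f : G → ℂ, Continuous f → tsupport f ⊆ K →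
      ‖ν f‖ ≤ C * ⨆ x, ‖f x‖ := by
  classical
  haveI := hullFilter_neBot hν
  obtain ⟨hμr, hμconv⟩ := hμtb
  -- the Banach space of bounded continuous functions vanishing outside K
  let S : Submodule ℂ (G →ᵇ ℂ) :=
    { carrier := {f : G →ᵇ ℂ | ∀ x, x ∉ K → f x = 0}
      add_mem' := fun hf hg x hx => by
        simp only [BoundedContinuousFunction.coe_add, Pi.add_apply, hf x hx, hg x hx, add_zero]
      zero_mem' := fun x _ => rfl
      smul_mem' := fun a f hf x hx => by
        simp only [BoundedContinuousFunction.coe_smul, Pi.smul_apply, hf x hx, smul_zero] }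
  have hSclosed : IsClosed (S : Set (G →ᵇ ℂ)) := by
    have h1 : (S : Set (G →ᵇ ℂ))
        = ⋂ (x : G) (_ : x ∉ K), {f : G →ᵇ ℂ | f x = 0} := by
      ext f; simp [S, Set.mem_iInter]; exact Iff.rfl
    rw [h1]
    exact isClosed_iInter fun x => isClosed_iInter fun _ =>
      isClosed_eq (continuous_eval_const x) continuous_const
  haveI : CompleteSpace S := hSclosed.completeSpace_coe
  -- membership facts
  have hmem_cs : ∀ f : S, HasCompactSupport ((f : G →ᵇ ℂ) : G → ℂ) := by
    intro f
    refine IsCompact.of_isClosed_subset hK.closure (isClosed_tsupport _) ?_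
    refine closure_mono ?_
    intro x hx
    by_contra hxK
    exact hx (f.2 x hxK)
  have hmem_cc : ∀ f : S, IsCc ((f : G →ᵇ ℂ) : G → ℂ) := fun f =>
    ⟨(f : G →ᵇ ℂ).continuous, hmem_cs f⟩
  -- the family of translation functionals
  have hTex : ∀ t : G, ∃ T : S →L[ℂ] ℂ,
      ∀ f : S, T f = μ (fun s => (f : G →ᵇ ℂ) (t + s)) := by
    intro t
    let L : S →ₗ[ℂ] ℂ :=
      { toFun := fun f => μ (fun s => (f : G →ᵇ ℂ) (t + s))
        map_add' := fun f g => by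
          have h1 : (fun s => ((f + g : S) : G →ᵇ ℂ) (t + s))
              = (fun s => (f : G →ᵇ ℂ) (t + s)) + (fun s => (g : G →ᵇ ℂ) (t + s)) := rfl
          show μ _ = _
          rw [h1]
          exact hμr.1 _ _ ((hmem_cc f).comp_add t) ((hmem_cc g).comp_add t)
        map_smul' := fun a f => by
          have h1 : (fun s => ((a • f : S) : G →ᵇ ℂ) (t + s))
              = a • (fun s => (f : G →ᵇ ℂ) (t + s)) := rfl
          show μ _ = _
          rw [h1]
          exact hμr.2.1 a _ ((hmem_cc f).comp_add t) }
    -- continuity bound from the Radon property of μ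
    obtain ⟨C, hC⟩ := hμr.2.2 (closure ((fun s => -t + s) '' K))
      ((hK.image (continuous_add_left (-t))).closure)
    refine ⟨L.mkContinuous C ?_, fun f => rfl⟩
    intro f
    have hsupp : tsupport (fun s => (f : G →ᵇ ℂ) (t + s))
        ⊆ closure ((fun s => -t + s) '' K) := by
      refine closure_mono ?_
      intro x hx
      have hxK : t + x ∈ K := by
        by_contra hxx
        exact hx (f.2 (t + x) hxx)
      exact ⟨t + x, hxK, by simp⟩
    have hb := hC _ ((f : G →ᵇ ℂ).continuous.comp (continuous_add_left t)) hsupp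
    have h2 : (⨆ x, ‖(f : G →ᵇ ℂ) (t + x)‖) = ⨆ y, ‖(f : G →ᵇ ℂ) y‖ :=
      (Equiv.addLeft t).iSup_comp (g := fun y => ‖(f : G →ᵇ ℂ) y‖)
    calc ‖μ (fun s => (f : G →ᵇ ℂ) (t + s))‖
        ≤ C * ⨆ x, ‖(f : G →ᵇ ℂ) (t + x)‖ := hb
      _ = C * ‖f‖ := by
          rw [h2, ← BoundedContinuousFunction.norm_eq_iSup_norm, Submodule.norm_coe]
  choose T hT using hTex
  -- pointwise boundedness via translation boundedness of μ
  have hpt : ∀ f : S, ∃ C, ∀ t : G, ‖T t f‖ ≤ C := by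
    intro f
    obtain ⟨C, hC⟩ := (hμconv (fun y => (f : G →ᵇ ℂ) (-y)) ((hmem_cc f).comp_neg)).2
    refine ⟨C, fun t => ?_⟩
    have h1 : T t f = convF (fun y => (f : G →ᵇ ℂ) (-y)) μ (-t) := by
      rw [hT t f]
      exact congrArg μ (funext fun s => by congr 1; abel)
    rw [h1]
    exact hC (-t)
  obtain ⟨C', hC'⟩ := banach_steinhaus fun f => hpt f
  refine ⟨C', fun f hf hsupp => ?_⟩
  -- package f as an element of S
  have hfcs : HasCompactSupport f :=
    IsCompact.of_isClosed_subset hK (isClosed_tsupport f) hsupp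
  obtain ⟨x₀, hx₀⟩ := (hf.norm).exists_forall_ge_of_hasCompactSupport hfcs.norm
  let fb : G →ᵇ ℂ := BoundedContinuousFunction.ofNormedAddCommGroup f hf ‖f x₀‖ hx₀
  have hfb : ∀ x, fb x = f x := fun x => rfl
  have hfbS : fb ∈ S := by
    intro x hx
    exact image_eq_zero_of_notMem_tsupport (fun h => hx (hsupp h))
  have hbnd : ∀ t : G, ‖T t ⟨fb, hfbS⟩‖ ≤ C' * ⨆ x, ‖f x‖ := by
    intro t
    calc ‖T t ⟨fb, hfbS⟩‖ ≤ ‖T t‖ * ‖(⟨fb, hfbS⟩ : S)‖ := (T t).le_opNorm _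
      _ ≤ C' * ‖(⟨fb, hfbS⟩ : S)‖ :=
          mul_le_mul_of_nonneg_right (hC' t) (norm_nonneg _)
      _ = C' * ⨆ x, ‖f x‖ := by
          rw [← Submodule.norm_coe, BoundedContinuousFunction.norm_eq_iSup_norm]
          rfl
  refine le_of_tendsto (tendsto_eval μ ν ⟨hf, hfcs⟩).norm ?_
  filter_upwards [hullFilter_orbit μ ν] with ρ ⟨t, ht⟩
  have h2 : ρ f = T t ⟨fb, hfbS⟩ := by
    rw [ht, hT t]
    rfl
  rw [h2]
  exact hbnd t

end Aux3
section Aux4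

variable [UniformSpace G] [AddCommGroup G] [IsUniformAddGroup G]
variable {μ ν : MeasF G} {c : G → ℂ}

lemma hull_wapFn (hμtb : IsTbF μ) (hμw : IsWapFn (convF c μ)) (hν : ν ∈ hullM μ)
    (hc : IsCc c) : IsWapFn (convF c ν) := by
  classical
  haveI hFne := hullFilter_neBot hν
  obtain ⟨hucμ, hbμ, hbμeq, hbμcpt⟩ := hμw
  have hucν := convF_hull_uc hμtb hν hc
  obtain ⟨C, hCμ, hCν⟩ := convF_hull_bound hμtb hν hc
  let hbν : G →ᵇ ℂ :=
    BoundedContinuousFunction.ofNormedAddCommGroup _ hucν.continuous C hCν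
  refine ⟨hucν, hbν, fun x => rfl, ?_⟩
  set Kμ := closure (toWeakSpace ℂ (G →ᵇ ℂ) ''
    {g : G →ᵇ ℂ | ∃ s : G, g = bcfTranslate hbμ s}) with hKμdef
  refine IsCompact.of_isClosed_subset hbμcpt isClosed_closure
    (closure_minimal ?_ isClosed_closure)
  rintro w ⟨g0, ⟨s, rfl⟩, rfl⟩
  -- goal: the weak image of `bcfTranslate hbν s` lies in `Kμ`
  let tsel : MeasF G → G := fun ρ =>
    if h : ∃ t : G, ρ = translateM t μ then h.choose else 0
  have htsel : ∀ ρ, (∃ t : G, ρ = translateM t μ) → ρ = translateM (tsel ρ) μ := by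
    intro ρ h
    simp only [tsel, dif_pos h]
    exact h.choose_spec
  let Ψ : MeasF G → WeakSpace ℂ (G →ᵇ ℂ) :=
    fun ρ => toWeakSpace ℂ (G →ᵇ ℂ) (bcfTranslate hbμ (s + tsel ρ))
  have hΨKμ : ∀ ρ, Ψ ρ ∈ Kμ := fun ρ =>
    subset_closure (Set.mem_image_of_mem _ ⟨s + tsel ρ, rfl⟩)
  haveI hmapne : (Filter.map Ψ (hullFilter μ ν)).NeBot := hFne.map Ψ
  obtain ⟨g, hgKμ, hgcl⟩ := hbμcpt (f := Filter.map Ψ (hullFilter μ ν))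
    (le_principal_iff.mpr (Filter.mem_map.mpr (Filter.Eventually.of_forall hΨKμ)))
  have hgeq : ∀ x : G, ((toWeakSpace ℂ (G →ᵇ ℂ)).symm g) x = bcfTranslate hbν s x := by
    intro x
    have hev : Continuous fun w : WeakSpace ℂ (G →ᵇ ℂ) =>
        (BoundedContinuousFunction.evalCLM ℂ x) ((toWeakSpace ℂ (G →ᵇ ℂ)).symm w) :=
      WeakBilin.eval_continuous _ (BoundedContinuousFunction.evalCLM ℂ x)
    have hmc : MapClusterPt g (hullFilter μ ν) Ψ := hgcl
    have hcl2 := MapClusterPt.continuousAt_comp hev.continuousAt hmc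
    have htd : Tendsto (fun ρ : MeasF G =>
        (BoundedContinuousFunction.evalCLM ℂ x) ((toWeakSpace ℂ (G →ᵇ ℂ)).symm (Ψ ρ)))
        (hullFilter μ ν) (𝓝 (convF c ν (x - s))) := by
      refine Tendsto.congr' ?_ (tendsto_convF μ ν hc (x - s))
      filter_upwards [hullFilter_orbit μ ν] with ρ hρ
      have h1 : convF c ρ (x - s) = convF c μ (x - s - tsel ρ) := by
        conv_lhs => rw [htsel ρ hρ]
        exact convF_translateM μ c _ _
      show convF c ρ (x - s) = hbμ (x - (s + tsel ρ))
      rw [h1, hbμeq]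
      congr 1
      abel
    have hne : (𝓝 (((toWeakSpace ℂ (G →ᵇ ℂ)).symm g) x)
        ⊓ 𝓝 (convF c ν (x - s))).NeBot :=
      Filter.NeBot.mono hcl2 (inf_le_inf_left _ htd)
    have heq := eq_of_nhds_neBot hne
    rw [heq]
    rfl
  have hfinal : (toWeakSpace ℂ (G →ᵇ ℂ)).symm g = bcfTranslate hbν s :=
    BoundedContinuousFunction.ext hgeq
  rw [← hfinal, LinearEquiv.apply_symm_apply]
  exact hgKμ

end Aux4
section Aux5

variable [UniformSpace G] [AddCommGroup G] [IsUniformAddGroup G]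
  [MeasurableSpace G] [BorelSpace G]

lemma setIntegral_image_addLeft (θ : Measure G) [θ.IsAddLeftInvariant]
    (x : G) (A : Set G) (g : G → ℂ) (hg : Continuous g) :
    ∫ t in (fun s => x + s) '' A, g t ∂θ = ∫ s in A, g (x + s) ∂θ := by
  let e : G ≃ᵐ G := (Homeomorph.addLeft x).toMeasurableEquiv
  have hcoe : ⇑e = fun s => x + s := rfl
  have hmapθ : Measure.map (⇑e) θ = θ := by
    rw [hcoe]
    exact MeasureTheory.map_add_left_eq_self θ x
  have hinv : ∀ S : Set G, θ S = θ (⇑e ⁻¹' S) := by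
    intro S
    conv_lhs => rw [← hmapθ]
    exact MeasurableEquiv.map_apply e S
  have hrestrict : θ.restrict ((fun s => x + s) '' A)
      = Measure.map (⇑e) (θ.restrict A) := by
    ext u hu
    rw [Measure.restrict_apply hu, Measure.map_apply e.measurable hu,
      Measure.restrict_apply (hu.preimage e.measurable), ← hcoe,
      hinv (u ∩ ⇑e '' A), Set.preimage_inter, Set.preimage_image_eq A e.injective]
  calc ∫ t in (fun s => x + s) '' A, g t ∂θ
      = ∫ t, g t ∂(Measure.map (⇑e) (θ.restrict A)) := by rw [← hrestrict]
    _ = ∫ s, g (e s) ∂(θ.restrict A) :=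
        MeasureTheory.integral_map e.measurable.aemeasurable hg.aestronglyMeasurable
    _ = ∫ s in A, g (x + s) ∂θ := rfl

lemma hull_mean (θ : Measure G) [θ.IsAddHaarMeasure]
    {μ ν : MeasF G} {c : G → ℂ} (hμtb : IsTbF μ) (hν : ν ∈ hullM μ) (hc : IsCc c)
    (hμm : IsMeanFn θ (fun x => (‖convF c μ x‖ : ℂ)) 0) :
    IsMeanFn θ (fun x => (‖convF c ν x‖ : ℂ)) 0 := by
  intro A hA
  have hμu := hμm A hA
  rw [Metric.tendstoUniformly_iff] at hμu ⊢
  intro ε hε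
  obtain ⟨Cb, hCμ, hCν⟩ := convF_hull_bound hμtb hν hc
  have hcontν : Continuous (convF c ν) := (convF_hull_uc hμtb hν hc).continuous
  have hcontμ : Continuous (convF c μ) := (hμtb.2 c hc).1.continuous
  filter_upwards [hμu (ε / 2) (by linarith)] with n hn
  intro x
  rcases eq_or_ne (θ (A n)) 0 with h0 | h0
  · show dist (0 : ℂ) _ < ε
    simp [h0, hε]
  have hAn : IsCompact (A n) := hA.1 n
  have hfin : θ (A n) ≠ ⊤ := hAn.measure_lt_top.ne
  set m : ℝ := (θ (A n)).toReal with hm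
  have hmpos : 0 < m := ENNReal.toReal_pos h0 hfin
  -- find a good translate on a compact neighborhood of the integration region
  have hQ : IsCompact (closure ((fun s => x + s) '' A n)) :=
    (hAn.image (continuous_add_left x)).closure
  obtain ⟨t, ht⟩ := exists_translate_close hμtb hν hc hQ (δ := ε / 4) (by linarith)
  -- change of variables for both integrals
  have hIν : ∫ u in (fun s => x + s) '' A n, (‖convF c ν u‖ : ℂ) ∂θ
      = ∫ s in A n, (‖convF c ν (x + s)‖ : ℂ) ∂θ :=
    setIntegral_image_addLeft θ x (A n) _
      (Complex.continuous_ofReal.comp hcontν.norm)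
  have hIμ : ∫ u in (fun s => x - t + s) '' A n, (‖convF c μ u‖ : ℂ) ∂θ
      = ∫ s in A n, (‖convF c μ (x - t + s)‖ : ℂ) ∂θ :=
    setIntegral_image_addLeft θ (x - t) (A n) _
      (Complex.continuous_ofReal.comp hcontμ.norm)
  -- integrability
  haveI : IsFiniteMeasure (θ.restrict (A n)) :=
    ⟨by rw [Measure.restrict_apply_univ]; exact hAn.measure_lt_top⟩
  have hnormle : ∀ (h : G → ℂ) (u : G), ‖(‖h u‖ : ℂ)‖ = ‖h u‖ := by
    intro h u
    rw [Complex.norm_real, norm_norm]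
  have hintν : Integrable (fun s => (‖convF c ν (x + s)‖ : ℂ)) (θ.restrict (A n)) := by
    refine Integrable.mono' (integrable_const Cb)
      (((Complex.continuous_ofReal.comp hcontν.norm).comp
        (continuous_add_left x)).aestronglyMeasurable) ?_
    refine Filter.Eventually.of_forall fun s => ?_
    rw [hnormle (convF c ν) (x + s)]
    exact hCν _
  have hintμ : Integrable (fun s => (‖convF c μ (x - t + s)‖ : ℂ)) (θ.restrict (A n)) := by
    refine Integrable.mono' (integrable_const Cb)
      (((Complex.continuous_ofReal.comp hcontμ.norm).comp
        (continuous_add_left (x - t))).aestronglyMeasurable) ?_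
    refine Filter.Eventually.of_forall fun s => ?_
    rw [hnormle (convF c μ) (x - t + s)]
    exact hCμ _
  -- the two integrals are `ε/4 * m`-close
  have hdiff : ‖(∫ s in A n, (‖convF c ν (x + s)‖ : ℂ) ∂θ)
      - ∫ s in A n, (‖convF c μ (x - t + s)‖ : ℂ) ∂θ‖ ≤ ε / 4 * m := by
    rw [← MeasureTheory.integral_sub hintν hintμ]
    have hae : ∀ᵐ s ∂(θ.restrict (A n)), s ∈ closure (A n) :=
      MeasureTheory.ae_mono (Measure.restrict_mono subset_closure le_rfl)
        (ae_restrict_mem isClosed_closure.measurableSet)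
    have hbnd : ∀ᵐ s ∂(θ.restrict (A n)),
        ‖(‖convF c ν (x + s)‖ : ℂ) - (‖convF c μ (x - t + s)‖ : ℂ)‖ ≤ ε / 4 := by
      filter_upwards [hae] with s hs
      have hxs : x + s ∈ closure ((fun s => x + s) '' A n) :=
        image_closure_subset_closure_image (continuous_add_left x) ⟨s, hs, rfl⟩
      have h3 := ht (x + s) hxs
      have h4 : x + s - t = x - t + s := by abel
      rw [h4] at h3
      calc ‖(‖convF c ν (x + s)‖ : ℂ) - (‖convF c μ (x - t + s)‖ : ℂ)‖
          = |‖convF c ν (x + s)‖ - ‖convF c μ (x - t + s)‖| := by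
            rw [← Complex.ofReal_sub, Complex.norm_real, Real.norm_eq_abs]
        _ ≤ ‖convF c ν (x + s) - convF c μ (x - t + s)‖ :=
            abs_norm_sub_norm_le _ _
        _ = dist (convF c ν (x + s)) (convF c μ (x - t + s)) := (dist_eq_norm _ _).symm
        _ ≤ ε / 4 := h3
    calc ‖∫ s in A n, ((‖convF c ν (x + s)‖ : ℂ) - (‖convF c μ (x - t + s)‖ : ℂ)) ∂θ‖
        ≤ ε / 4 * ((θ.restrict (A n)) Set.univ).toReal :=
          MeasureTheory.norm_integral_le_of_norm_le_const hbnd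
      _ = ε / 4 * m := by rw [Measure.restrict_apply_univ]
  -- conclude
  have h2 := hn (x - t)
  rw [dist_zero_left, hIμ, norm_smul, Real.norm_eq_abs,
    abs_of_nonneg (inv_nonneg.mpr hmpos.le)] at h2
  rw [dist_zero_left, hIν, norm_smul, Real.norm_eq_abs,
    abs_of_nonneg (inv_nonneg.mpr hmpos.le)]
  set a : ℝ := ‖∫ s in A n, (‖convF c ν (x + s)‖ : ℂ) ∂θ‖ with ha
  set b : ℝ := ‖∫ s in A n, (‖convF c μ (x - t + s)‖ : ℂ) ∂θ‖ with hb
  have h6 : a ≤ b + ε / 4 * m := by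
    have h7 := norm_sub_norm_le (∫ s in A n, (‖convF c ν (x + s)‖ : ℂ) ∂θ)
      (∫ s in A n, (‖convF c μ (x - t + s)‖ : ℂ) ∂θ)
    have := le_trans h7 hdiff
    linarith
  have h8 : m⁻¹ * a ≤ m⁻¹ * b + ε / 4 := by
    have h9 : m⁻¹ * a ≤ m⁻¹ * (b + ε / 4 * m) :=
      mul_le_mul_of_nonneg_left h6 (inv_nonneg.mpr hmpos.le)
    have h10 : m⁻¹ * (ε / 4 * m) = ε / 4 := by
      rw [mul_comm (ε / 4) m, ← mul_assoc, inv_mul_cancel₀ hmpos.ne', one_mul]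
    rw [mul_add, h10] at h9
    exact h9
  linarith

end Aux5
/-- If `μ` is a null weakly almost periodic measure, then every element of
the hull `X(μ)` is a null weakly almost periodic measure. -/
theorem hull_of_wap0_subset_wap0 [UniformSpace G] [AddCommGroup G] [IsUniformAddGroup G]
    [LocallyCompactSpace G] [SigmaCompactSpace G] [MeasurableSpace G] [BorelSpace G]
    (θ : Measure G) [θ.IsAddHaarMeasure]
    (μ : MeasF G) (hμ : IsWap0M θ μ) :
    ∀ ν ∈ hullM μ, IsWap0M θ ν := by
  intro ν hν
  obtain ⟨⟨hμtb, hμwap⟩, hμ0⟩ := hμ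
  refine ⟨⟨⟨⟨fun f g hf hg => hull_add hμtb.1 hν hf hg,
    fun a f hf => hull_smul hμtb.1 hν a hf,
    fun K hK => hull_bound hμtb hν hK⟩, fun c hc =>
      ⟨convF_hull_uc hμtb hν hc,
        Exists.imp (fun C h => h.2) (convF_hull_bound hμtb hν hc)⟩⟩,
    fun c hc => hull_wapFn hμtb (hμwap c hc) hν hc⟩,
    fun c hc => hull_mean θ hμtb hν hc (hμ0 c hc)⟩
end

section
/- Let G be a locally compact abelian group and μ a weakly almost periodic measure on G. If ν ∈ X(μ), then the null weakly almost periodic part ν₀ of the Eberlein decomposition of ν belongs to X(μ₀), the hull of the null part of μ. -/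
open Filter Topology MeasureTheory BoundedContinuousFunction
open scoped Pointwise

variable {G : Type*}

open scoped ENNReal

namespace NPaux

variable {G : Type*}

section Group

variable [TopologicalSpace G] [AddCommGroup G] [IsTopologicalAddGroup G]

lemma img_translate (x : G) (S : Set G) :
    (fun u => x + u) '' S = (fun u => -x + u) ⁻¹' S := by
  ext u
  constructor
  · rintro ⟨a, ha, rfl⟩
    simpa [neg_add_cancel_left] using ha
  · intro h
    exact ⟨-x + u, h, by simp⟩

lemma isCompact_closure_of_isCompact [LocallyCompactSpace G] {S : Set G}
    (hS : IsCompact S) : IsCompact (closure S) := by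
  obtain ⟨V, hVc, hVn⟩ := exists_compact_mem_nhds (0 : G)
  have hsub : closure S ⊆ S + V := by
    intro x hx
    have hnV : -V ∈ 𝓝 (0 : G) := neg_mem_nhds_zero G hVn
    have ht : (fun u => -x + u) ⁻¹' (-V) ∈ 𝓝 x := by
      apply ContinuousAt.preimage_mem_nhds (by fun_prop)
      simpa using hnV
    obtain ⟨s, hs1, hs2⟩ := mem_closure_iff_nhds.1 hx _ ht
    have : -(-x + s) ∈ V := by simpa [Set.mem_neg] using hs1
    have h2 : -(-x + s) = x - s := by rw [neg_add_rev, neg_neg, sub_eq_add_neg, add_comm]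
    rw [h2] at this
    refine ⟨s, hs2, x - s, this, ?_⟩
    show s + (x - s) = x
    rw [add_comm]
    exact sub_add_cancel x s
  exact IsCompact.of_isClosed_subset (hS.add hVc) isClosed_closure hsub

variable [MeasurableSpace G] [BorelSpace G] (θ : Measure G) [θ.IsAddLeftInvariant]

lemma measure_translate (x : G) (S : Set G) :
    θ ((fun u => x + u) '' S) = θ S := by
  rw [img_translate]; exact measure_preimage_add θ _ S

end Group

/-- iterated sumsets -/
def itK [AddCommGroup G] (K : Set G) : ℕ → Set G
  | 0 => K
  | n + 1 => itK K n + K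

section ItK

variable [TopologicalSpace G] [AddCommGroup G] [IsTopologicalAddGroup G] {K : Set G}

lemma itK_compact (hK : IsCompact K) : ∀ n, IsCompact (itK K n)
  | 0 => hK
  | n + 1 => (itK_compact hK n).add hK

lemma itK_closed (hKcl : IsClosed K) (hK : IsCompact K) : ∀ n, IsClosed (itK K n)
  | 0 => hKcl
  | n + 1 => hKcl.add_left_of_isCompact (itK_compact hK n)

lemma subset_itK (h0 : (0:G) ∈ K) : ∀ n, K ⊆ itK K n
  | 0 => subset_rfl
  | n + 1 => fun x hx => by
      have h2 := Set.add_mem_add (subset_itK h0 n hx) h0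
      rw [add_zero] at h2
      exact h2

lemma itK_subset_succ (h0 : (0:G) ∈ K) (n : ℕ) : itK K n ⊆ itK K (n+1) := by
  intro x hx
  have h2 := Set.add_mem_add hx h0
  rw [add_zero] at h2
  exact h2

lemma add_itK_subset {x : G} (hx : x ∈ K) (n : ℕ) :
    (fun u => x + u) '' itK K n ⊆ itK K (n+1) := by
  rintro - ⟨a, ha, rfl⟩
  refine ⟨a, ha, x, hx, ?_⟩
  show a + x = x + a
  abel

end ItK

section Growth

variable [TopologicalSpace G] [AddCommGroup G] [IsTopologicalAddGroup G]
variable [MeasurableSpace G] [BorelSpace G] (θ : Measure G) [θ.IsAddLeftInvariant]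

lemma growth {K : Set G} (hKc : IsCompact K) (hKi : (0:G) ∈ interior K) :
    ∃ m : ℕ, ∀ n : ℕ, θ (itK K n) ≤ ((n+1 : ℕ) : ℝ≥0∞)^m * θ K := by
  classical
  -- finite cover of K + K by translates of K
  have hcov0 : K + K ⊆ ⋃ x : G, (fun u => x + u) '' interior K := by
    intro y hy
    exact Set.mem_iUnion.2 ⟨y, ⟨0, hKi, by simp⟩⟩
  obtain ⟨F, hF⟩ := (hKc.add hKc).elim_finite_subcover
    (fun x : G => (fun u => x + u) '' interior K)
    (fun x => by
      show IsOpen ((fun u => x + u) '' interior K)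
      rw [img_translate]
      exact isOpen_interior.preimage (continuous_add_left (-x)))
    hcov0
  have hcov : K + K ⊆ ⋃ x ∈ F, (fun u => x + u) '' K := by
    refine hF.trans ?_
    refine Set.iUnion₂_mono fun x _ => Set.image_mono interior_subset
  -- weighted-sum parametrization of translates
  set ι := {x // x ∈ F}
  letI : Fintype ι := FinsetCoe.fintype F
  letI : DecidableEq ι := Classical.decEq ι
  refine ⟨Fintype.card ι, fun n => ?_⟩
  set σ : (ι → ℕ) → G := fun k => ∑ i : ι, k i • (i : G) with hσ
  have key : ∀ n, itK K n ⊆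
      ⋃ k ∈ Fintype.piFinset (fun _ : ι => Finset.range (n+1)), (fun u => σ k + u) '' K := by
    intro n
    induction n with
    | zero =>
      intro y hy
      have hk0 : (fun _ : ι => 0) ∈ Fintype.piFinset (fun _ : ι => Finset.range (0+1)) := by
        simp [Fintype.mem_piFinset]
      exact Set.mem_biUnion hk0 ⟨y, hy, by simp [hσ]⟩
    | succ n ih =>
      intro y hy
      obtain ⟨a, ha, v, hv, rfl⟩ := Set.mem_add.1 hy
      obtain ⟨k, hk, w, hw, haw⟩ := Set.mem_iUnion₂.1 (ih ha)
      have hwv : w + v ∈ ⋃ x ∈ F, (fun u => x + u) '' K := hcov (Set.add_mem_add hw hv)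
      obtain ⟨x, hxF, z, hz, hxz⟩ := Set.mem_iUnion₂.1 hwv
      have haw' : σ k + w = a := haw
      have hxz' : x + z = w + v := hxz
      let i0 : ι := ⟨x, hxF⟩
      let k' : ι → ℕ := Function.update k i0 (k i0 + 1)
      have hk'mem : k' ∈ Fintype.piFinset (fun _ : ι => Finset.range (n+2)) := by
        rw [Fintype.mem_piFinset]
        intro i
        show Function.update k i0 (k i0 + 1) i ∈ Finset.range (n+2)
        rw [Function.update_apply]
        have h1 := Finset.mem_range.1 ((Fintype.mem_piFinset.1 hk) i0)
        have h2 := Finset.mem_range.1 ((Fintype.mem_piFinset.1 hk) i)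
        rw [Finset.mem_range]
        split <;> omega
      have hσk' : σ k' = σ k + x := by
        show (∑ i : ι, Function.update k i0 (k i0 + 1) i • (i : G)) = σ k + x
        rw [Finset.sum_eq_add_sum_sdiff_singleton_of_mem (Finset.mem_univ i0)
          (fun i => Function.update k i0 (k i0 + 1) i • (i : G))]
        have e1 : Function.update k i0 (k i0 + 1) i0 • (i0:G) = k i0 • (i0:G) + (i0:G) := by
          rw [Function.update_self, succ_nsmul]
        have e2 : (∑ i ∈ Finset.univ \ {i0}, Function.update k i0 (k i0 + 1) i • (i:G))
            = ∑ i ∈ Finset.univ \ {i0}, k i • (i:G) := by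
          refine Finset.sum_congr rfl fun i hi => ?_
          have hne : i ≠ i0 := by
            have := (Finset.mem_sdiff.1 hi).2
            simpa using this
          rw [Function.update_of_ne hne]
        have e3 : σ k = k i0 • (i0 : G) + ∑ i ∈ Finset.univ \ {i0}, k i • (i : G) := by
          rw [hσ]
          exact Finset.sum_eq_add_sum_sdiff_singleton_of_mem (Finset.mem_univ i0) _
        rw [e1, e2, e3]
        have e4 : (i0 : G) = x := rfl
        rw [e4]
        abel
      refine Set.mem_biUnion hk'mem ⟨z, hz, ?_⟩
      show σ k' + z = a + v
      calc σ k' + z = σ k + (x + z) := by rw [hσk']; abel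
        _ = σ k + (w + v) := by rw [hxz']
        _ = (σ k + w) + v := by abel
        _ = a + v := by rw [haw']
  calc θ (itK K n) ≤ θ (⋃ k ∈ Fintype.piFinset (fun _ : ι => Finset.range (n+1)),
        (fun u => σ k + u) '' K) := measure_mono (key n)
    _ ≤ ∑ k ∈ Fintype.piFinset (fun _ : ι => Finset.range (n+1)), θ ((fun u => σ k + u) '' K) :=
        measure_biUnion_finset_le _ _
    _ = ∑ _k ∈ Fintype.piFinset (fun _ : ι => Finset.range (n+1)), θ K := by
        refine Finset.sum_congr rfl fun k _ => measure_translate θ _ _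
    _ = ((n+1 : ℕ) : ℝ≥0∞)^(Fintype.card ι) * θ K := by
        rw [Finset.sum_const, Fintype.card_piFinset]
        simp only [Finset.card_range, Finset.prod_const, Finset.card_univ, nsmul_eq_mul]
        push_cast
        ring
end Growth

lemma ratio_lemma {a : ℕ → ℝ} (hpos : ∀ n, 0 < a n) {C : ℝ} {m : ℕ}
    (hgrow : ∀ n : ℕ, a n ≤ C * ((n:ℝ)+1)^m) {ε : ℝ} (hε : 0 < ε) (j N : ℕ) :
    ∃ n, N ≤ n ∧ a (n + j) ≤ (1+ε) * a n := by
  by_contra hcon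
  push_neg at hcon
  have h : ∀ n, N ≤ n → (1+ε) * a n < a (n + j) := fun n hn => hcon n hn
  have key : ∀ t : ℕ, (1+ε)^t * a N ≤ a (N + t*j) := by
    intro t
    induction t with
    | zero => simp
    | succ t ih =>
      have h1 : (1+ε) * ((1+ε)^t * a N) ≤ (1+ε) * a (N + t*j) :=
        mul_le_mul_of_nonneg_left ih (by linarith)
      have h2 : (1+ε) * a (N + t*j) < a (N + t*j + j) := h _ (Nat.le_add_right _ _)
      have heq : N + (t+1)*j = N + t*j + j := by ring
      rw [heq]
      calc (1+ε)^(t+1) * a N = (1+ε) * ((1+ε)^t * a N) := by ring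
        _ ≤ (1+ε) * a (N + t*j) := h1
        _ ≤ a (N + t*j + j) := h2.le
  have hC : 0 < C := by
    have h := (hpos 0).trans_le (hgrow 0)
    simpa using h
  set D := C * ((N:ℝ) + j + 1)^m with hD
  have hDpos : 0 < D := by positivity
  have hbound : ∀ t : ℕ, a N ≤ D * (((t:ℝ)+1)^m / (1+ε)^t) := by
    intro t
    have h1 : (1+ε)^t * a N ≤ C * (((N + t*j : ℕ):ℝ)+1)^m := (key t).trans (hgrow _)
    have h2 : (((N + t*j : ℕ):ℝ)+1) ≤ ((N:ℝ)+j+1) * ((t:ℝ)+1) := by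
      push_cast
      nlinarith [Nat.cast_nonneg (α := ℝ) N, Nat.cast_nonneg (α := ℝ) t,
        Nat.cast_nonneg (α := ℝ) j]
    have h3 : (((N + t*j : ℕ):ℝ)+1)^m ≤ (((N:ℝ)+j+1) * ((t:ℝ)+1))^m := by
      apply pow_le_pow_left₀ (by positivity) h2
    have h4 : (1+ε)^t * a N ≤ D * ((t:ℝ)+1)^m := by
      calc (1+ε)^t * a N ≤ C * (((N + t*j : ℕ):ℝ)+1)^m := h1
        _ ≤ C * ((((N:ℝ)+j+1) * ((t:ℝ)+1))^m) := by
            exact mul_le_mul_of_nonneg_left h3 hC.le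
        _ = D * ((t:ℝ)+1)^m := by rw [hD, mul_pow]; ring
    have hp : (0:ℝ) < (1+ε)^t := by positivity
    rw [← mul_div_assoc, le_div_iff₀ hp]
    calc a N * (1+ε)^t = (1+ε)^t * a N := by ring
      _ ≤ D * ((t:ℝ)+1)^m := h4
  -- the RHS tends to 0
  have htend : Tendsto (fun t : ℕ => D * (((t:ℝ)+1)^m / (1+ε)^t)) atTop (𝓝 0) := by
    have h0 : Tendsto (fun t : ℕ => ((t:ℝ))^m / (1+ε)^t) atTop (𝓝 0) :=
      tendsto_pow_const_div_const_pow_of_one_lt m (by linarith)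
    have h1 : Tendsto (fun t : ℕ => (((t+1:ℕ):ℝ))^m / (1+ε)^(t+1)) atTop (𝓝 0) :=
      h0.comp (tendsto_add_atTop_nat 1)
    have h2 : Tendsto (fun t : ℕ => (1+ε) * ((((t+1:ℕ):ℝ))^m / (1+ε)^(t+1))) atTop
        (𝓝 ((1+ε) * 0)) := h1.const_mul _
    simp only [mul_zero] at h2
    have heq : (fun t : ℕ => D * (((t:ℝ)+1)^m / (1+ε)^t))
        = fun t : ℕ => D * ((1+ε) * ((((t+1:ℕ):ℝ))^m / (1+ε)^(t+1))) := by
      funext t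
      have hp : (0:ℝ) < (1+ε)^t := by positivity
      have hε1 : (0:ℝ) < 1+ε := by linarith
      push_cast
      rw [pow_succ]
      field_simp
    rw [heq]
    have := h2.const_mul D
    simpa using this
  obtain ⟨t, ht⟩ := (htend.eventually_lt_const (hpos N)).exists
  exact absurd (hbound t) (not_le.2 ht)


section Folner

variable [UniformSpace G] [AddCommGroup G] [IsUniformAddGroup G]
    [LocallyCompactSpace G] [SigmaCompactSpace G] [MeasurableSpace G] [BorelSpace G]
    (θ : MeasureTheory.Measure G) [θ.IsAddHaarMeasure]

lemma exists_folner :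
    ∃ A : ℕ → Set G, IsFolner θ A ∧
      ∀ n, MeasurableSet (A n) ∧ 0 < θ (A n) ∧ θ (A n) ≠ ∞ := by
  obtain ⟨V0, hV0c, hV0n⟩ := exists_compact_mem_nhds (0:G)
  obtain ⟨V, hVn, hVcl, hVsub⟩ := exists_mem_nhds_isClosed_subset hV0n
  have hVc : IsCompact V := IsCompact.of_isClosed_subset hV0c hVcl hVsub
  set Kc : ℕ → Set G := fun n => closure (compactCovering G n ∪ V) with hKc
  set K : ℕ → Set G := fun n => Kc n ∪ -(Kc n) with hK
  have hKcomp : ∀ n, IsCompact (K n) := by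
    intro n
    have h1 : IsCompact (Kc n) :=
      isCompact_closure_of_isCompact ((isCompact_compactCovering G n).union hVc)
    exact h1.union h1.neg
  have hKclosed : ∀ n, IsClosed (K n) := fun n => isClosed_closure.union isClosed_closure.neg
  have hVK : ∀ n, V ⊆ K n := fun n =>
    (Set.subset_union_right.trans subset_closure).trans Set.subset_union_left
  have h0K : ∀ n, (0:G) ∈ K n := fun n => hVK n (mem_of_mem_nhds hVn)
  have h0int : ∀ n, (0:G) ∈ interior (K n) := fun n =>
    interior_mono (hVK n) (mem_interior_iff_mem_nhds.2 hVn)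
  have hsym : ∀ n, ∀ x ∈ K n, -x ∈ K n := by
    intro n x hx
    rcases hx with hx | hx
    · exact Or.inr (by simpa [Set.mem_neg] using hx)
    · exact Or.inl (by simpa [Set.mem_neg] using hx)
  have hmem : ∀ x : G, ∃ N, ∀ n ≥ N, x ∈ K n := by
    intro x
    have hx : x ∈ ⋃ n, compactCovering G n := by
      rw [iUnion_compactCovering]; trivial
    obtain ⟨N, hN⟩ := Set.mem_iUnion.1 hx
    exact ⟨N, fun n hn => (Set.subset_union_left.trans
      (subset_closure.trans Set.subset_union_left)) (compactCovering_subset G hn hN)⟩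
  have hitpos : ∀ n i, 0 < θ (itK (K n) i) := by
    intro n i
    exact (IsOpen.measure_pos θ isOpen_interior ⟨0, h0int n⟩).trans_le
      (measure_mono (interior_subset.trans (subset_itK (h0K n) i)))
  have hitfin : ∀ n i, θ (itK (K n) i) ≠ ∞ := fun n i =>
    ((itK_compact (hKcomp n) i).measure_lt_top).ne
  have hitmeas : ∀ n i, MeasurableSet (itK (K n) i) := fun n i =>
    (itK_closed (hKclosed n) (hKcomp n) i).measurableSet
  have H : ∀ n : ℕ, ∃ i : ℕ,
      (θ (itK (K n) (i+1))).toReal ≤ (1 + 1/((n:ℝ)+1)) * (θ (itK (K n) i)).toReal := by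
    intro n
    obtain ⟨m, hm⟩ := growth θ (hKcomp n) (h0int n)
    have hpos : ∀ i, 0 < (θ (itK (K n) i)).toReal := fun i =>
      ENNReal.toReal_pos (hitpos n i).ne' (hitfin n i)
    have hgrow : ∀ i : ℕ, (θ (itK (K n) i)).toReal ≤ (θ (K n)).toReal * ((i:ℝ)+1)^m := by
      intro i
      have h1 := hm i
      have h2 : (θ (itK (K n) i)).toReal ≤ (((i+1 : ℕ) : ℝ≥0∞)^m * θ (K n)).toReal := by
        apply ENNReal.toReal_mono _ h1
        exact ENNReal.mul_ne_top (ENNReal.pow_ne_top (ENNReal.natCast_ne_top _))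
          ((hKcomp n).measure_lt_top).ne
      calc (θ (itK (K n) i)).toReal ≤ (((i+1 : ℕ) : ℝ≥0∞)^m * θ (K n)).toReal := h2
        _ = (θ (K n)).toReal * ((i:ℝ)+1)^m := by
            rw [ENNReal.toReal_mul, ENNReal.toReal_pow, ENNReal.toReal_natCast]
            push_cast
            ring
    have hε : (0:ℝ) < 1/((n:ℝ)+1) := by positivity
    obtain ⟨i, _, hi⟩ := ratio_lemma hpos hgrow hε 1 0
    exact ⟨i, hi⟩
  choose I hI using H
  refine ⟨fun n => itK (K n) (I n),
    ⟨fun n => itK_compact (hKcomp n) (I n), ?_⟩,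
    fun n => ⟨hitmeas n (I n), hitpos n (I n), hitfin n (I n)⟩⟩
  intro x
  obtain ⟨N, hN⟩ := hmem x
  have hupper : Tendsto (fun n : ℕ => ENNReal.ofReal (2 * (1/((n:ℝ)+1)))) atTop (𝓝 0) := by
    have h1 : Tendsto (fun n : ℕ => 2 * (1/((n:ℝ)+1))) atTop (𝓝 (2 * 0)) := by
      have := tendsto_one_div_add_atTop_nhds_zero_nat (𝕜 := ℝ)
      exact this.const_mul 2
    rw [mul_zero] at h1
    have := ENNReal.tendsto_ofReal h1
    simpa using this
  apply tendsto_of_tendsto_of_tendsto_of_le_of_le' tendsto_const_nhds hupper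
  · exact Filter.Eventually.of_forall fun n => zero_le
  · filter_upwards [eventually_ge_atTop N] with n hn
    set S1 := itK (K n) (I n) with hS1
    set S2 := itK (K n) (I n + 1) with hS2
    have hxK : x ∈ K n := hN n hn
    have hxK' : -x ∈ K n := hsym n x hxK
    have h12 : S1 ⊆ S2 := itK_subset_succ (h0K n) (I n)
    have hfin1 : θ S1 ≠ ∞ := hitfin n (I n)
    have hfin2 : θ S2 ≠ ∞ := hitfin n (I n + 1)
    set θd := θ (S2 \ S1) with hθd
    have hdfin : θd ≠ ∞ := ((measure_mono Set.diff_subset).trans_lt hfin2.lt_top).ne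
    have h_d1 : θ (((fun t => x + t) '' S1) \ S1) ≤ θd :=
      measure_mono (Set.diff_subset_diff (add_itK_subset hxK _) subset_rfl)
    have h_d2 : θ (S1 \ ((fun t => x + t) '' S1)) ≤ θd := by
      have hinj : Function.Injective (fun u : G => -x + u) := fun a b h => by
        simpa using congrArg (fun z => x + z) h
      have e : (fun u => -x + u) '' (S1 \ ((fun t => x + t) '' S1))
          = ((fun u => -x + u) '' S1) \ S1 := by
        rw [Set.image_diff hinj]
        congr 1
        rw [Set.image_image]
        have : (fun u : G => -x + (x + u)) = id := funext fun u => neg_add_cancel_left x u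
        rw [this, Set.image_id]
      calc θ (S1 \ ((fun t => x + t) '' S1))
          = θ ((fun u => -x + u) '' (S1 \ ((fun t => x + t) '' S1))) :=
            (measure_translate θ _ _).symm
        _ = θ (((fun u => -x + u) '' S1) \ S1) := by rw [e]
        _ ≤ θd := measure_mono (Set.diff_subset_diff (add_itK_subset hxK' _) subset_rfl)
    have hsymmd : θ (symmDiff S1 ((fun t => x + t) '' S1)) ≤ θd + θd := by
      rw [Set.symmDiff_def]
      exact (measure_union_le _ _).trans (add_le_add h_d2 h_d1)
    have hdr : θd.toReal ≤ (1/((n:ℝ)+1)) * (θ S1).toReal := by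
      have hdiff : θd = θ S2 - θ S1 :=
        measure_diff h12 (hitmeas n (I n)).nullMeasurableSet hfin1
      rw [hdiff, ENNReal.toReal_sub_of_le (measure_mono h12) hfin2]
      have := hI n
      rw [← hS1, ← hS2] at this
      linarith
    -- conclude the ratio bound
    rw [ENNReal.div_le_iff_le_mul (Or.inl (hitpos n (I n)).ne') (Or.inl hfin1)]
    calc θ (symmDiff S1 ((fun t => x + t) '' S1)) ≤ θd + θd := hsymmd
      _ ≤ ENNReal.ofReal (2 * (1/((n:ℝ)+1))) * θ S1 := by
          have hθS1 : θ S1 = ENNReal.ofReal ((θ S1).toReal) := (ENNReal.ofReal_toReal hfin1).symm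
          rw [hθS1, ← ENNReal.ofReal_mul (by positivity)]
          rw [ENNReal.le_ofReal_iff_toReal_le (by simp [hdfin]) (by positivity)]
          rw [ENNReal.toReal_add hdfin hdfin]
          have h2 := hdr
          nlinarith [ENNReal.toReal_nonneg (a := θd)]

end Folner

section Mean

variable [UniformSpace G] [AddCommGroup G] [IsUniformAddGroup G]
    [LocallyCompactSpace G] [SigmaCompactSpace G] [MeasurableSpace G] [BorelSpace G]
    (θ : MeasureTheory.Measure G) [θ.IsAddHaarMeasure]

/-- real reformulation of zero mean -/
def MZf (h : G → ℂ) : Prop :=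
  ∀ A : ℕ → Set G, IsFolner θ A → ∀ ε : ℝ, 0 < ε → ∀ᶠ n in atTop, ∀ x : G,
    ((θ (A n)).toReal)⁻¹ * ∫ t in (fun s => x + s) '' A n, ‖h t‖ ∂θ < ε

lemma mzf_congr {f g : G → ℂ} (hfg : ∀ x, f x = g x) (hf : MZf θ f) : MZf θ g := by
  have : f = g := funext hfg
  rwa [this] at hf

lemma mzf_of_mean {h : G → ℂ} (hm : IsMeanFn θ (fun x => (‖h x‖:ℂ)) 0) : MZf θ h := by
  intro A hA ε hε
  have h1 := (Metric.tendstoUniformly_iff.1 (hm A hA)) ε hε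
  filter_upwards [h1] with n hn x
  have h2 := hn x
  have hco : (∫ t in (fun s => x + s) '' A n, ((‖h t‖:ℝ):ℂ) ∂θ)
      = ((∫ t in (fun s => x + s) '' A n, ‖h t‖ ∂θ : ℝ) : ℂ) := integral_ofReal
  rw [hco] at h2
  set v := ∫ t in (fun s => x + s) '' A n, ‖h t‖ ∂θ with hv
  have hvnn : 0 ≤ v := integral_nonneg fun t => norm_nonneg _
  set r := ((θ (A n)).toReal)⁻¹ with hr
  have hrnn : (0:ℝ) ≤ r := inv_nonneg.2 ENNReal.toReal_nonneg
  have h3 : dist (0:ℂ) (r • ((v:ℝ):ℂ)) = r * v := by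
    rw [dist_comm, dist_zero_right, norm_smul]
    simp [abs_of_nonneg hrnn, abs_of_nonneg hvnn]
  rw [h3] at h2
  exact h2

lemma intOn_norm (h : G →ᵇ ℂ) (s : Set G) (hfin : θ s ≠ ∞) :
    MeasureTheory.IntegrableOn (fun t => ‖h t‖) s θ := by
  apply MeasureTheory.Measure.integrableOn_of_bounded hfin
  · exact (h.continuous.norm.measurable).aestronglyMeasurable
  · exact MeasureTheory.ae_of_all _ fun t => by
      simpa [Real.norm_eq_abs, abs_of_nonneg (norm_nonneg (h t))] using h.norm_coe_le_norm t

lemma measure_img_eq (x : G) (S : Set G) : θ ((fun s => x + s) '' S) = θ S :=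
  measure_translate θ x S

lemma img_fin {A : Set G} (hA : IsCompact A) (x : G) : θ ((fun s => x + s) '' A) ≠ ∞ := by
  rw [measure_img_eq]
  exact hA.measure_lt_top.ne

lemma mzf_dominated {h h1 h2 : G →ᵇ ℂ} {a b : ℝ} (ha : 0 ≤ a) (hb : 0 ≤ b)
    (hdom : ∀ x, ‖h x‖ ≤ a * ‖h1 x‖ + b * ‖h2 x‖)
    (H1 : MZf θ ⇑h1) (H2 : MZf θ ⇑h2) : MZf θ ⇑h := by
  intro A hA ε hε
  have hε1 : (0:ℝ) < ε/(2*(a+1)) := by positivity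
  have hε2 : (0:ℝ) < ε/(2*(b+1)) := by positivity
  filter_upwards [H1 A hA _ hε1, H2 A hA _ hε2] with n hn1 hn2 x
  set B := (fun s => x + s) '' A n with hB
  have hBfin : θ B ≠ ∞ := img_fin θ (hA.1 n) x
  have i0 : MeasureTheory.IntegrableOn (fun t => ‖h t‖) B θ := intOn_norm θ h B hBfin
  have i1 : MeasureTheory.IntegrableOn (fun t => ‖h1 t‖) B θ := intOn_norm θ h1 B hBfin
  have i2 : MeasureTheory.IntegrableOn (fun t => ‖h2 t‖) B θ := intOn_norm θ h2 B hBfin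
  have hint : ∫ t in B, ‖h t‖ ∂θ ≤ a * ∫ t in B, ‖h1 t‖ ∂θ + b * ∫ t in B, ‖h2 t‖ ∂θ := by
    have hmono : ∫ t in B, ‖h t‖ ∂θ ≤ ∫ t in B, (a * ‖h1 t‖ + b * ‖h2 t‖) ∂θ :=
      MeasureTheory.integral_mono i0 ((i1.const_mul a).add (i2.const_mul b)) fun t => hdom t
    rwa [MeasureTheory.integral_add (i1.const_mul a) (i2.const_mul b),
      MeasureTheory.integral_const_mul, MeasureTheory.integral_const_mul] at hmono
  set r := ((θ (A n)).toReal)⁻¹ with hr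
  have hrnn : (0:ℝ) ≤ r := inv_nonneg.2 ENNReal.toReal_nonneg
  have key : r * ∫ t in B, ‖h t‖ ∂θ ≤ a * (r * ∫ t in B, ‖h1 t‖ ∂θ)
      + b * (r * ∫ t in B, ‖h2 t‖ ∂θ) := by
    have := mul_le_mul_of_nonneg_left hint hrnn
    calc r * ∫ t in B, ‖h t‖ ∂θ
        ≤ r * (a * ∫ t in B, ‖h1 t‖ ∂θ + b * ∫ t in B, ‖h2 t‖ ∂θ) := this
      _ = a * (r * ∫ t in B, ‖h1 t‖ ∂θ) + b * (r * ∫ t in B, ‖h2 t‖ ∂θ) := by ring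
  have hub1 : a * (r * ∫ t in B, ‖h1 t‖ ∂θ) ≤ a * (ε/(2*(a+1))) :=
    mul_le_mul_of_nonneg_left (hn1 x).le ha
  have hub2 : b * (r * ∫ t in B, ‖h2 t‖ ∂θ) ≤ b * (ε/(2*(b+1))) :=
    mul_le_mul_of_nonneg_left (hn2 x).le hb
  have hfin1 : a * (ε/(2*(a+1))) < ε/2 := by
    have h1 : a * (ε/(2*(a+1))) < (a+1) * (ε/(2*(a+1))) :=
      mul_lt_mul_of_pos_right (by linarith) hε1
    have h2 : (a+1) * (ε/(2*(a+1))) = ε/2 := by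
      field_simp
    linarith
  have hfin2 : b * (ε/(2*(b+1))) ≤ ε/2 := by
    have h1 : b * (ε/(2*(b+1))) ≤ (b+1) * (ε/(2*(b+1))) :=
      mul_le_mul_of_nonneg_right (by linarith) hε2.le
    have h2 : (b+1) * (ε/(2*(b+1))) = ε/2 := by
      field_simp
    linarith
  calc r * ∫ t in B, ‖h t‖ ∂θ
      ≤ a * (r * ∫ t in B, ‖h1 t‖ ∂θ) + b * (r * ∫ t in B, ‖h2 t‖ ∂θ) := key
    _ ≤ a * (ε/(2*(a+1))) + b * (ε/(2*(b+1))) := add_le_add hub1 hub2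
    _ < ε := by linarith

lemma mzf_translate (h : G →ᵇ ℂ) (t : G) (H : MZf θ ⇑h) :
    MZf θ (fun x => h (x - t)) := by
  intro A hA ε hε
  filter_upwards [H A hA ε hε] with n hn x
  have key : ∫ u in (fun s => x + s) '' A n, ‖h (u - t)‖ ∂θ
      = ∫ u in (fun s => (x - t) + s) '' A n, ‖h u‖ ∂θ := by
    have hmp : MeasureTheory.MeasurePreserving (fun u : G => u + t) θ θ := by
      have h1 := measurePreserving_add_left θ t
      have h2 : (fun x : G => t + x) = fun u : G => u + t := funext fun u => add_comm t u
      rwa [h2] at h1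
    have hemb : MeasurableEmbedding (fun u : G => u + t) :=
      ((Homeomorph.addRight t).toMeasurableEquiv).measurableEmbedding
    have himg : (fun u : G => u + t) '' ((fun s => (x - t) + s) '' A n)
        = (fun s => x + s) '' A n := by
      rw [Set.image_image]
      have h3 : (fun s : G => x - t + s + t) = fun s : G => x + s := funext fun s => by abel
      rw [h3]
    rw [← himg, hmp.setIntegral_image_emb hemb]
    simp only [add_sub_cancel_right]
  rw [key]
  exact hn (x - t)

/-- The set of zero-mean bounded continuous functions. -/
def Wmz : Set (G →ᵇ ℂ) := {h | MZf θ ⇑h}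

lemma zero_mem_Wmz : (0 : G →ᵇ ℂ) ∈ Wmz θ := by
  intro A hA ε hε
  refine Filter.Eventually.of_forall fun n x => ?_
  have : (fun t => ‖(0 : G →ᵇ ℂ) t‖) = fun _ : G => (0:ℝ) := by
    funext t; simp
  rw [this]
  simpa using hε

lemma smul_mem_Wmz (z : ℂ) {h : G →ᵇ ℂ} (hh : h ∈ Wmz θ) : z • h ∈ Wmz θ := by
  refine mzf_dominated θ (norm_nonneg z) le_rfl ?_ hh (zero_mem_Wmz θ)
  intro x
  simp [norm_smul]

lemma real_smul_mem_Wmz (s : ℝ) {h : G →ᵇ ℂ} (hh : h ∈ Wmz θ) : s • h ∈ Wmz θ := by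
  refine mzf_dominated θ (abs_nonneg s) le_rfl ?_ hh (zero_mem_Wmz θ)
  intro x
  simp [norm_smul, Real.norm_eq_abs]

lemma sub_mem_Wmz {h1 h2 : G →ᵇ ℂ} (hh1 : h1 ∈ Wmz θ) (hh2 : h2 ∈ Wmz θ) :
    h1 - h2 ∈ Wmz θ := by
  refine mzf_dominated θ zero_le_one zero_le_one ?_ hh1 hh2
  intro x
  simp only [BoundedContinuousFunction.coe_sub, Pi.sub_apply, one_mul]
  exact norm_sub_le _ _

lemma convex_Wmz : Convex ℝ (Wmz θ) := by
  intro h1 h1m h2 h2m a b ha hb hab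
  refine mzf_dominated θ ha hb ?_ h1m h2m
  intro x
  calc ‖(a • h1 + b • h2) x‖ ≤ ‖(a • h1) x‖ + ‖(b • h2) x‖ := norm_add_le _ _
    _ = a * ‖h1 x‖ + b * ‖h2 x‖ := by
        simp [norm_smul, Real.norm_eq_abs, abs_of_nonneg ha, abs_of_nonneg hb]

lemma closed_Wmz : IsClosed (Wmz θ) := by
  apply isClosed_of_closure_subset
  intro h hcl
  intro A hA ε hε
  obtain ⟨k, hkW, hk⟩ := Metric.mem_closure_iff.1 hcl (ε/2) (by positivity)
  rw [dist_comm] at hk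
  filter_upwards [hkW A hA (ε/2) (by positivity)] with n hn x
  set B := (fun s => x + s) '' A n with hB
  have hBfin : θ B ≠ ∞ := img_fin θ (hA.1 n) x
  set dd := dist k h with hdd
  have hddnn : 0 ≤ dd := dist_nonneg
  have i0 : MeasureTheory.IntegrableOn (fun t => ‖h t‖) B θ := intOn_norm θ h B hBfin
  have i1 : MeasureTheory.IntegrableOn (fun t => ‖k t‖) B θ := intOn_norm θ k B hBfin
  have ic : MeasureTheory.IntegrableOn (fun _ : G => dd) B θ :=
    MeasureTheory.integrableOn_const hBfin
  have hint : ∫ t in B, ‖h t‖ ∂θ ≤ (∫ t in B, ‖k t‖ ∂θ) + dd * (θ B).toReal := by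
    have hmono : ∫ t in B, ‖h t‖ ∂θ ≤ ∫ t in B, (‖k t‖ + dd) ∂θ := by
      refine MeasureTheory.integral_mono i0 (i1.add ic) fun t => ?_
      have h1 : ‖h t‖ - ‖k t‖ ≤ ‖k t - h t‖ := by
        have := abs_norm_sub_norm_le (k t) (h t)
        rw [abs_le] at this
        linarith [this.1]
      have h2 : ‖k t - h t‖ = dist (k t) (h t) := (dist_eq_norm _ _).symm
      have h3 : dist (k t) (h t) ≤ dd := BoundedContinuousFunction.dist_coe_le_dist t
      simp only [Pi.add_apply]
      linarith
    rwa [MeasureTheory.integral_add i1 ic, MeasureTheory.setIntegral_const,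
      smul_eq_mul, mul_comm] at hmono
  set r := ((θ (A n)).toReal)⁻¹ with hr
  have hrnn : (0:ℝ) ≤ r := inv_nonneg.2 ENNReal.toReal_nonneg
  have hBA : (θ B).toReal = (θ (A n)).toReal := by rw [hB, measure_img_eq]
  have hr1 : r * (θ B).toReal ≤ 1 := by
    rw [hBA, hr]
    rcases eq_or_ne ((θ (A n)).toReal) 0 with h0 | h0
    · simp [h0]
    · rw [inv_mul_cancel₀ h0]
  calc r * ∫ t in B, ‖h t‖ ∂θ
      ≤ r * ((∫ t in B, ‖k t‖ ∂θ) + dd * (θ B).toReal) := mul_le_mul_of_nonneg_left hint hrnn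
    _ = r * (∫ t in B, ‖k t‖ ∂θ) + dd * (r * (θ B).toReal) := by ring
    _ ≤ r * (∫ t in B, ‖k t‖ ∂θ) + dd * 1 := by
        have := mul_le_mul_of_nonneg_left hr1 hddnn
        linarith
    _ < ε/2 + ε/2 := by
        have h1 := hn x
        rw [mul_one]
        exact add_lt_add_of_lt_of_le h1 (by linarith)
    _ = ε := by ring

/-- Mazur-type argument : a weak limit of zero-mean functions has zero mean. -/
lemma mem_Wmz_of_weakClosure {S : Set (G →ᵇ ℂ)} (hS : S ⊆ Wmz θ)
    {w : WeakSpace ℂ (G →ᵇ ℂ)}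
    (hw : w ∈ closure (toWeakSpace ℂ (G →ᵇ ℂ) '' S)) :
    (toWeakSpace ℂ (G →ᵇ ℂ)).symm w ∈ Wmz θ := by
  by_contra hnot
  obtain ⟨f, u, hfu, huw⟩ :=
    geometric_hahn_banach_closed_point (convex_Wmz θ) (closed_Wmz θ) hnot
  have hf0 : ∀ b ∈ Wmz θ, f b = 0 := by
    intro b hb
    by_contra hfb
    have hmem : ∀ s : ℝ, s * f b < u := by
      intro s
      have h1 := hfu ((s:ℝ) • b) (real_smul_mem_Wmz θ s hb)
      simpa [_root_.map_smul, smul_eq_mul] using h1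
    have h2 := hmem ((u+1)/(f b))
    rw [div_mul_cancel₀ _ hfb] at h2
    linarith
  have hu0 : 0 < u := by
    have h1 := hfu 0 (zero_mem_Wmz θ)
    simpa using h1
  set g : (G →ᵇ ℂ) →L[ℂ] ℂ := StrongDual.extendRCLike f with hg
  have hg0 : ∀ b ∈ Wmz θ, g b = 0 := by
    intro b hb
    rw [hg, StrongDual.extendRCLike_apply]
    rw [hf0 b hb, hf0 _ (smul_mem_Wmz θ _ hb)]
    simp
  have hgc : Continuous fun x : WeakSpace ℂ (G →ᵇ ℂ) => g ((toWeakSpace ℂ (G →ᵇ ℂ)).symm x) :=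
    WeakBilin.eval_continuous _ g
  have hcl : closure (toWeakSpace ℂ (G →ᵇ ℂ) '' S)
      ⊆ {x : WeakSpace ℂ (G →ᵇ ℂ) | g ((toWeakSpace ℂ (G →ᵇ ℂ)).symm x) = 0} := by
    apply closure_minimal
    · rintro - ⟨b, hb, rfl⟩
      simp only [Set.mem_setOf_eq, LinearEquiv.symm_apply_apply]
      exact hg0 b (hS hb)
    · exact isClosed_singleton.preimage hgc
  have hw0 : g ((toWeakSpace ℂ (G →ᵇ ℂ)).symm w) = 0 := hcl hw
  have hfw : f ((toWeakSpace ℂ (G →ᵇ ℂ)).symm w) = 0 := by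
    rw [hg, StrongDual.extendRCLike_apply] at hw0
    have h2 := congrArg Complex.re hw0
    simp [Complex.ext_iff] at h2
    simpa using h2
  rw [hfw] at huw
  linarith

end Mean

section Orb

variable [UniformSpace G] [AddCommGroup G] [IsUniformAddGroup G]

/-- The translation orbit of a bounded continuous function. -/
def orb (f : G →ᵇ ℂ) : Set (G →ᵇ ℂ) := {g | ∃ s : G, g = bcfTranslate f s}

lemma bcfTranslate_apply (f : G →ᵇ ℂ) (s x : G) : bcfTranslate f s x = f (x - s) := rfl

lemma bcfTranslate_translate (f : G →ᵇ ℂ) (t s : G) :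
    bcfTranslate (bcfTranslate f t) s = bcfTranslate f (t + s) := by
  ext x
  simp only [bcfTranslate_apply]
  congr 1
  rw [sub_sub, add_comm s t]

lemma lip_translate (s : G) : LipschitzWith 1 (fun f : G →ᵇ ℂ => bcfTranslate f s) := by
  refine LipschitzWith.of_dist_le_mul fun f g => ?_
  have h1 : dist (bcfTranslate f s) (bcfTranslate g s) ≤ dist f g := by
    refine (BoundedContinuousFunction.dist_le dist_nonneg).2 fun x => ?_
    exact BoundedContinuousFunction.dist_coe_le_dist (x - s)
  simpa using h1

lemma orb_limit {f : G →ᵇ ℂ} (hc : IsCompact (closure (orb f))) (𝒰 : Ultrafilter G) :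
    ∃ g ∈ closure (orb f), Tendsto (fun t => bcfTranslate f t) 𝒰 (𝓝 g) := by
  have hle : ↑(𝒰.map fun t => bcfTranslate f t) ≤ 𝓟 (closure (orb f)) := by
    rw [le_principal_iff]
    exact Filter.mem_map.2 (Filter.univ_mem' fun t => subset_closure ⟨t, rfl⟩)
  obtain ⟨g, hg, hle2⟩ := hc.ultrafilter_le_nhds _ hle
  exact ⟨g, hg, hle2⟩

lemma orb_mem_closure_sub {f g : G →ᵇ ℂ} (hc : IsCompact (closure (orb f)))
    (hg : g ∈ closure (orb f)) : IsCompact (closure (orb g)) := by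
  have hsub : orb g ⊆ closure (orb f) := by
    rintro - ⟨s, rfl⟩
    have hcont : Continuous (fun h : G →ᵇ ℂ => bcfTranslate h s) := (lip_translate s).continuous
    have himg : (fun h : G →ᵇ ℂ => bcfTranslate h s) '' orb f ⊆ orb f := by
      rintro - ⟨-, ⟨t, rfl⟩, rfl⟩
      exact ⟨t + s, by show bcfTranslate (bcfTranslate f t) s = bcfTranslate f (t + s); rw [bcfTranslate_translate]⟩
    have h2 : bcfTranslate g s ∈ closure ((fun h : G →ᵇ ℂ => bcfTranslate h s) '' orb f) :=
      image_closure_subset_closure_image hcont ⟨g, hg, rfl⟩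
    exact closure_mono himg h2
  exact IsCompact.of_isClosed_subset hc isClosed_closure
    (closure_minimal hsub isClosed_closure)

set_option synthInstance.maxHeartbeats 1000000 in
lemma orb_sub_compact {f1 f2 : G →ᵇ ℂ} (h1 : IsCompact (closure (orb f1)))
    (h2 : IsCompact (closure (orb f2))) : IsCompact (closure (orb (f1 - f2))) := by
  set D := (fun p : (G →ᵇ ℂ) × (G →ᵇ ℂ) => p.1 - p.2) ''
    ((closure (orb f1)) ×ˢ (closure (orb f2))) with hD
  have hDc : IsCompact D := (h1.prod h2).image (continuous_fst.sub continuous_snd)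
  have hsub : orb (f1 - f2) ⊆ D := by
    rintro - ⟨s, rfl⟩
    refine ⟨(bcfTranslate f1 s, bcfTranslate f2 s),
      ⟨subset_closure ⟨s, rfl⟩, subset_closure ⟨s, rfl⟩⟩, ?_⟩
    show bcfTranslate f1 s - bcfTranslate f2 s = bcfTranslate (f1 - f2) s
    ext x
    simp [bcfTranslate_apply]
  exact IsCompact.of_isClosed_subset hDc isClosed_closure (closure_minimal hsub hDc.isClosed)

variable [LocallyCompactSpace G] [SigmaCompactSpace G] [MeasurableSpace G] [BorelSpace G]
    (θ : MeasureTheory.Measure G) [θ.IsAddHaarMeasure]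

/-- a Bohr almost periodic function with zero mean modulus vanishes identically -/
lemma sap_mzf_zero (A : ℕ → Set G) (hA : IsFolner θ A) (hAm : ∀ n, MeasurableSet (A n))
    (hApos : ∀ n, 0 < θ (A n)) (hAfin : ∀ n, θ (A n) ≠ ∞)
    {d : G →ᵇ ℂ} (hc : IsCompact (closure (orb d))) (hmz : MZf θ ⇑d) (p : G) : d p = 0 := by
  by_contra hp
  set a := ‖d p‖ with ha
  have hapos : 0 < a := norm_pos_iff.2 hp
  have htb : TotallyBounded (orb d) := (hc.totallyBounded).subset subset_closure
  obtain ⟨T, hTsub, hTfin, hTcov⟩ := totallyBounded_iff_subset.1 htb _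
    (Metric.dist_mem_uniformity (show (0:ℝ) < a/4 by positivity))
  have hTne : T.Nonempty := by
    rcases Set.eq_empty_or_nonempty T with rfl | hne
    · exfalso
      have h0 : bcfTranslate d 0 ∈ orb d := ⟨0, rfl⟩
      have := hTcov h0
      simpa using this
    · exact hne
  have hsel0 : ∀ y ∈ T, ∃ s : G, y = bcfTranslate d s := fun y hy => hTsub hy
  choose! sel hsel using hsel0
  set Sset : Set G := {u | a/2 ≤ ‖d u‖} with hSset
  have hcover : ∀ t : G, ∃ y ∈ T, t - (sel y - p) ∈ Sset := by
    intro t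
    have hmem : bcfTranslate d t ∈ orb d := ⟨t, rfl⟩
    obtain ⟨y, hy, hdy⟩ := Set.mem_iUnion₂.1 (hTcov hmem)
    have hdy' : dist (bcfTranslate d t) (bcfTranslate d (sel y)) < a/4 := by
      have h5 := hdy
      rw [hsel y hy] at h5
      exact h5
    have hpt : dist (d p) (d (p + t - sel y)) < a/4 := by
      calc dist (d p) (d (p + t - sel y))
          = dist (bcfTranslate d t (p+t)) (bcfTranslate d (sel y) (p+t)) := by
            rw [bcfTranslate_apply, bcfTranslate_apply, add_sub_cancel_right]
        _ ≤ dist (bcfTranslate d t) (bcfTranslate d (sel y)) :=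
            BoundedContinuousFunction.dist_coe_le_dist (p + t)
        _ < a/4 := hdy'
    refine ⟨y, hy, ?_⟩
    have h2 : |‖d p‖ - ‖d (p + t - sel y)‖| ≤ dist (d p) (d (p + t - sel y)) := by
      rw [dist_eq_norm]
      exact abs_norm_sub_norm_le _ _
    have h3 : a/2 ≤ ‖d (p + t - sel y)‖ := by
      rw [abs_le] at h2
      nlinarith [hpt, h2.1, h2.2]
    have h4 : p + t - sel y = t - (sel y - p) := by abel
    rw [h4] at h3
    exact h3
  set TF := hTfin.toFinset with hTF
  set k := TF.card with hk
  have hkpos : 0 < k := Finset.card_pos.2 (Set.Finite.toFinset_nonempty hTfin |>.2 hTne)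
  have hεpos : (0:ℝ) < (a/2)/(k:ℝ) := by positivity
  obtain ⟨n, hn⟩ := (hmz A hA _ hεpos).exists
  set U : (G →ᵇ ℂ) → Set G := fun y => (fun u => u + (sel y - p)) '' Sset with hU
  have hcovA : A n ⊆ ⋃ y ∈ TF, (A n ∩ U y) := by
    intro t ht
    obtain ⟨y, hy, hyS⟩ := hcover t
    refine Set.mem_biUnion ((Set.Finite.mem_toFinset hTfin).2 hy) ⟨ht, ?_⟩
    refine ⟨t - (sel y - p), hyS, ?_⟩
    show t - (sel y - p) + (sel y - p) = t
    abel
  have hsum : θ (A n) ≤ ∑ y ∈ TF, θ (A n ∩ U y) :=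
    (measure_mono hcovA).trans (measure_biUnion_finset_le _ _)
  obtain ⟨y0, hy0, hmax⟩ := TF.exists_max_image (fun y => θ (A n ∩ U y))
    (Finset.card_pos.1 hkpos)
  have hbig : θ (A n) / (k:ℝ≥0∞) ≤ θ (A n ∩ U y0) := by
    have h1 : θ (A n) ≤ (k:ℝ≥0∞) * θ (A n ∩ U y0) := by
      calc θ (A n) ≤ ∑ y ∈ TF, θ (A n ∩ U y) := hsum
        _ ≤ TF.card • θ (A n ∩ U y0) := Finset.sum_le_card_nsmul _ _ _ fun y hy => hmax y hy
        _ = (k:ℝ≥0∞) * θ (A n ∩ U y0) := by rw [nsmul_eq_mul, hk]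
    rw [ENNReal.div_le_iff_le_mul (Or.inl (by exact_mod_cast hkpos.ne'))
      (Or.inl (ENNReal.natCast_ne_top k))]
    rw [mul_comm]
    exact h1
  set x := -(sel y0 - p) with hx
  set B := (fun s => x + s) '' A n with hB
  have htrans : θ (A n) / (k:ℝ≥0∞) ≤ θ (Sset ∩ B) := by
    refine hbig.trans ?_
    have hsub : (fun u => x + u) '' (A n ∩ U y0) ⊆ Sset ∩ B := by
      rintro - ⟨v, ⟨hvA, u, huS, rfl⟩, rfl⟩
      constructor
      · show x + (u + (sel y0 - p)) ∈ Sset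
        have heq : x + (u + (sel y0 - p)) = u := by rw [hx]; abel
        rw [heq]
        exact huS
      · exact ⟨u + (sel y0 - p), hvA, rfl⟩
    calc θ (A n ∩ U y0) = θ ((fun u => x + u) '' (A n ∩ U y0)) := (measure_translate θ _ _).symm
      _ ≤ θ (Sset ∩ B) := measure_mono hsub
  have hSm : MeasurableSet Sset := by
    have hclosed : IsClosed Sset := isClosed_le continuous_const (d.continuous.norm)
    exact hclosed.measurableSet
  have hBm : MeasurableSet B := by
    rw [hB, img_translate]
    exact (hAm n).preimage (measurable_const_add _)
  have hBfin : θ B ≠ ∞ := by rw [hB, measure_img_eq]; exact hAfin n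
  have hSBfin : θ (Sset ∩ B) ≠ ∞ :=
    ((measure_mono Set.inter_subset_right).trans_lt hBfin.lt_top).ne
  have hint : (a/2) * (θ (Sset ∩ B)).toReal ≤ ∫ u in B, ‖d u‖ ∂θ := by
    have h1 : (a/2) * (θ (Sset ∩ B)).toReal ≤ ∫ u in Sset ∩ B, ‖d u‖ ∂θ :=
      setIntegral_ge_of_const_le_real (hSm.inter hBm) hSBfin (fun u hu => hu.1)
        ((intOn_norm θ d B hBfin).mono_set Set.inter_subset_right)
    have h2 : ∫ u in Sset ∩ B, ‖d u‖ ∂θ ≤ ∫ u in B, ‖d u‖ ∂θ :=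
      MeasureTheory.setIntegral_mono_set (intOn_norm θ d B hBfin)
        (MeasureTheory.ae_of_all _ fun u => norm_nonneg _)
        (HasSubset.Subset.eventuallyLE Set.inter_subset_right)
    linarith
  have hr : 0 < (θ (A n)).toReal := ENNReal.toReal_pos (hApos n).ne' (hAfin n)
  have h3 : (θ (A n) / (k:ℝ≥0∞)).toReal ≤ (θ (Sset ∩ B)).toReal :=
    ENNReal.toReal_mono hSBfin htrans
  have h4 : (θ (A n) / (k:ℝ≥0∞)).toReal = (θ (A n)).toReal / (k:ℝ) := by
    rw [ENNReal.toReal_div, ENNReal.toReal_natCast]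
  have hfinal : (a/2)/(k:ℝ) ≤ ((θ (A n)).toReal)⁻¹ * ∫ u in B, ‖d u‖ ∂θ := by
    have h5 : (θ (A n)).toReal / (k:ℝ) ≤ (θ (Sset ∩ B)).toReal := by rw [← h4]; exact h3
    have h6 : (a/2) * ((θ (A n)).toReal / (k:ℝ)) ≤ (a/2) * (θ (Sset ∩ B)).toReal :=
      mul_le_mul_of_nonneg_left h5 (by positivity)
    calc (a/2)/(k:ℝ) = ((θ (A n)).toReal)⁻¹ * ((a/2) * ((θ (A n)).toReal / (k:ℝ))) := by
          field_simp
      _ ≤ ((θ (A n)).toReal)⁻¹ * ((a/2) * (θ (Sset ∩ B)).toReal) :=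
          mul_le_mul_of_nonneg_left h6 (inv_nonneg.2 ENNReal.toReal_nonneg)
      _ ≤ ((θ (A n)).toReal)⁻¹ * ∫ u in B, ‖d u‖ ∂θ :=
          mul_le_mul_of_nonneg_left hint (inv_nonneg.2 ENNReal.toReal_nonneg)
  exact absurd (hn x) (not_lt.2 hfinal)

end Orb

section Final

variable [UniformSpace G] [AddCommGroup G] [IsUniformAddGroup G]

lemma isCc_comp_homeo {c : G → ℂ} (hc : IsCc c) (φ : G ≃ₜ G) :
    IsCc (fun x => c (φ x)) :=
  ⟨hc.1.comp φ.continuous, hc.2.comp_homeomorph φ⟩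

end Final

end NPaux

open NPaux

/-- Let `μ` be weakly almost periodic with Eberlein decomposition
`μ = μs + μ₀`. If `ν ∈ X(μ)` with Eberlein decomposition `ν = νs + ν₀`, then
`ν₀ ∈ X(μ₀)`. -/
theorem null_part_mem_hull_null_part [UniformSpace G] [AddCommGroup G] [IsUniformAddGroup G]
    [LocallyCompactSpace G] [SigmaCompactSpace G] [MeasurableSpace G] [BorelSpace G]
    (θ : Measure G) [θ.IsAddHaarMeasure]
    (μ μs μ0 : MeasF G) (hμ : IsWapM μ) (hs : IsSapM μs) (h0 : IsWap0M θ μ0)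
    (hsum : ∀ f : G → ℂ, IsCc f → μ f = μs f + μ0 f)
    (ν νs ν0 : MeasF G) (hν : ν ∈ hullM μ) (hνs : IsSapM νs) (hν0 : IsWap0M θ ν0)
    (hνsum : ∀ f : G → ℂ, IsCc f → ν f = νs f + ν0 f) :
    ν0 ∈ hullM μ0 := by
  classical
  set E : MeasF G → ({c : G → ℂ // IsCc c} → ℂ) :=
    fun ρ => fun c : {c : G → ℂ // IsCc c} => ρ c.1 with hE
  -- extract an ultrafilter along which translates of μ converge to ν
  have hν' : E ν ∈ closure (E '' {ρ : MeasF G | ∃ t : G, ρ = translateM t μ}) := by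
    have := (@closure_induced (MeasF G) _ _
      (fun ρ => fun c : {c : G → ℂ // IsCc c} => ρ c.1) ν
      {ρ : MeasF G | ∃ t : G, ρ = translateM t μ}).1 hν
    exact this
  set e : G → ({c : G → ℂ // IsCc c} → ℂ) := fun t => E (translateM t μ) with he
  have hrange : E '' {ρ : MeasF G | ∃ t : G, ρ = translateM t μ} = Set.range e := by
    ext p
    constructor
    · rintro ⟨ρ, ⟨t, rfl⟩, rfl⟩
      exact ⟨t, rfl⟩
    · rintro ⟨t, rfl⟩
      exact ⟨translateM t μ, ⟨t, rfl⟩, rfl⟩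
  rw [hrange] at hν'
  have hcomap : (Filter.comap e (𝓝 (E ν))).NeBot := by
    rw [Filter.comap_neBot_iff]
    intro t ht
    obtain ⟨p, hp1, a, rfl⟩ := mem_closure_iff_nhds.1 hν' t ht
    exact ⟨a, hp1⟩
  set 𝒰 : Ultrafilter G := Ultrafilter.of (Filter.comap e (𝓝 (E ν))) with h𝒰def
  have h𝒰 : Tendsto e 𝒰 (𝓝 (E ν)) := by
    calc Filter.map e ↑𝒰 ≤ Filter.map e (Filter.comap e (𝓝 (E ν))) :=
        Filter.map_mono (Ultrafilter.of_le _)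
      _ ≤ 𝓝 (E ν) := Filter.map_comap_le
  have htend : ∀ (c : G → ℂ), IsCc c →
      Tendsto (fun t => (translateM t μ) c) 𝒰 (𝓝 (ν c)) := by
    intro c hc
    exact (tendsto_pi_nhds.1 h𝒰) ⟨c, hc⟩
  -- the Følner sequence
  obtain ⟨A, hAf, hAprops⟩ := exists_folner θ
  -- coordinatewise convergence of the null parts
  have hcoord : ∀ (c : G → ℂ), IsCc c →
      Tendsto (fun t => (translateM t μ0) c) 𝒰 (𝓝 (ν0 c)) := by
    intro c hc
    set cN : G → ℂ := fun y => c (-y) with hcN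
    have hcNc : IsCc cN := isCc_comp_homeo hc (Homeomorph.neg G)
    have conv_apply : ∀ (ρ : MeasF G) (z : G), convF cN ρ z = ρ (fun s => c (s - z)) := by
      intro ρ z
      show ρ (fun s => cN (z - s)) = _
      congr 1
      funext s
      show c (-(z - s)) = c (s - z)
      rw [neg_sub]
    obtain ⟨-, φb, hφb, hφcomp⟩ := hs.2 cN hcNc
    obtain ⟨-, ψb, hψb, hψcomp⟩ := h0.1.2 cN hcNc
    obtain ⟨-, φ'b, hφ'b, hφ'comp⟩ := hνs.2 cN hcNc
    obtain ⟨-, ψ'b, hψ'b, hψ'comp⟩ := hν0.1.2 cN hcNc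
    -- rewrite hb-pointwise identities into the useful direction
    have hφb' : ∀ x, φb x = convF cN μs x := hφb
    have hψb' : ∀ x, ψb x = convF cN μ0 x := hψb
    have hφ'b' : ∀ x, φ'b x = convF cN νs x := hφ'b
    have hψ'b' : ∀ x, ψ'b x = convF cN ν0 x := hψ'b
    -- norm limit of the strongly almost periodic part
    obtain ⟨gΦ, hgΦmem, hgΦtend⟩ := orb_limit hφcomp 𝒰
    have hgΦpt : ∀ r, Tendsto (fun t => φb (r - t)) 𝒰 (𝓝 (gΦ r)) := by
      intro r
      have hcont : Continuous fun f : G →ᵇ ℂ => f r :=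
        (BoundedContinuousFunction.evalCLM ℂ r).continuous
      exact (hcont.tendsto gΦ).comp hgΦtend
    -- weak limit of the null part
    have hψle : ↑(𝒰.map fun t => toWeakSpace ℂ (G →ᵇ ℂ) (bcfTranslate ψb t)) ≤
        Filter.principal (closure (toWeakSpace ℂ (G →ᵇ ℂ) ''
          {g : G →ᵇ ℂ | ∃ s : G, g = bcfTranslate ψb s})) := by
      rw [Filter.le_principal_iff]
      exact Filter.mem_map.2 (Filter.univ_mem' fun t => subset_closure ⟨_, ⟨t, rfl⟩, rfl⟩)
    obtain ⟨W, hWmem, hWtend⟩ := hψcomp.ultrafilter_le_nhds _ hψle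
    set gΨ : G →ᵇ ℂ := (toWeakSpace ℂ (G →ᵇ ℂ)).symm W with hgΨdef
    have hgΨpt : ∀ r, Tendsto (fun t => ψb (r - t)) 𝒰 (𝓝 (gΨ r)) := by
      intro r
      set er : (G →ᵇ ℂ) →L[ℂ] ℂ := BoundedContinuousFunction.evalCLM ℂ r with her
      have hcont : Continuous fun x : WeakSpace ℂ (G →ᵇ ℂ) =>
          er ((toWeakSpace ℂ (G →ᵇ ℂ)).symm x) := WeakBilin.eval_continuous _ er
      have h2 := (hcont.tendsto W).comp hWtend
      exact h2
    -- the weak limit has zero mean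
    have hψWmz : MZf θ ⇑ψb :=
      mzf_congr θ (fun x => (hψb' x).symm) (mzf_of_mean θ (h0.2 cN hcNc))
    have horbW : orb ψb ⊆ Wmz θ := by
      rintro - ⟨s, rfl⟩
      exact mzf_congr θ (fun x => rfl) (mzf_translate θ ψb s hψWmz)
    have hgΨmz : gΨ ∈ Wmz θ := mem_Wmz_of_weakClosure θ horbW hWmem
    -- fundamental identity between the two decompositions
    have hkey : ∀ r : G, gΦ r + gΨ r = φ'b r + ψ'b r := by
      intro r
      have hccr : IsCc (fun x => c (x - r)) := isCc_comp_homeo hc (Homeomorph.subRight r)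
      have h1 : Tendsto (fun t => φb (r - t) + ψb (r - t)) 𝒰 (𝓝 (gΦ r + gΨ r)) :=
        (hgΦpt r).add (hgΨpt r)
      have h2 : (fun t => φb (r - t) + ψb (r - t))
          = fun t => (translateM t μ) (fun x => c (x - r)) := by
        funext t
        rw [hφb', hψb', conv_apply, conv_apply]
        have hcc2 : IsCc (fun s => c (s - (r - t))) :=
          isCc_comp_homeo hc (Homeomorph.subRight (r - t))
        rw [← hsum _ hcc2]
        show μ (fun s => c (s - (r - t))) = μ (fun x => c (t + x - r))
        congr 1
        funext s
        congr 1
        abel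
      have h3 : Tendsto (fun t => (translateM t μ) (fun x => c (x - r))) 𝒰
          (𝓝 (ν (fun x => c (x - r)))) := htend _ hccr
      rw [← h2] at h3
      have h4 := tendsto_nhds_unique h1 h3
      rw [hνsum _ hccr] at h4
      have h5 : νs (fun x => c (x - r)) = φ'b r := by
        rw [hφ'b', conv_apply]
      have h6 : ν0 (fun x => c (x - r)) = ψ'b r := by
        rw [hψ'b', conv_apply]
      rw [h5, h6] at h4
      exact h4
    -- the difference is strongly almost periodic with zero mean, hence zero
    have hΔcomp : IsCompact (closure (orb (gΦ - φ'b))) :=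
      orb_sub_compact (orb_mem_closure_sub hφcomp hgΦmem) hφ'comp
    have hΔeq : gΦ - φ'b = ψ'b - gΨ := by
      ext x
      have h8 := hkey x
      simp only [BoundedContinuousFunction.coe_sub, Pi.sub_apply]
      linear_combination h8
    have hψ'mz : ψ'b ∈ Wmz θ :=
      mzf_congr θ (fun x => (hψ'b' x).symm) (mzf_of_mean θ (hν0.2 cN hcNc))
    have hΔmz : MZf θ ⇑(gΦ - φ'b) := by
      rw [hΔeq]
      exact sub_mem_Wmz θ hψ'mz hgΨmz
    have hΔ0 : (gΦ - φ'b) 0 = 0 :=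
      sap_mzf_zero θ A hAf (fun n => (hAprops n).1) (fun n => (hAprops n).2.1)
        (fun n => (hAprops n).2.2) hΔcomp hΔmz 0
    have h7 : gΨ 0 = ψ'b 0 := by
      have h8 := hkey 0
      simp only [BoundedContinuousFunction.coe_sub, Pi.sub_apply] at hΔ0
      linear_combination h8 - hΔ0
    -- conclude the coordinatewise convergence
    have h11 := hgΨpt 0
    rw [h7] at h11
    have h12 : (fun t => ψb (0 - t)) = fun t => (translateM t μ0) c := by
      funext t
      rw [hψb', conv_apply]
      show μ0 (fun s => c (s - (0 - t))) = μ0 (fun x => c (t + x))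
      congr 1
      funext s
      congr 1
      abel
    rw [h12] at h11
    have h13 : ψ'b 0 = ν0 c := by
      rw [hψ'b', conv_apply]
      show ν0 (fun s => c (s - 0)) = ν0 c
      congr 1
      funext s
      rw [sub_zero]
    rw [h13] at h11
    exact h11
  -- assemble
  have hgoal : E ν0 ∈ closure (E '' {ρ : MeasF G | ∃ t : G, ρ = translateM t μ0}) := by
    have htends : Tendsto (fun t => E (translateM t μ0)) 𝒰 (𝓝 (E ν0)) := by
      rw [tendsto_pi_nhds]
      rintro ⟨c, hc⟩
      exact hcoord c hc
    exact mem_closure_of_tendsto htends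
      (Filter.Eventually.of_forall fun t => ⟨translateM t μ0, ⟨t, rfl⟩, rfl⟩)
  exact (@closure_induced (MeasF G) _ _
    (fun ρ => fun c : {c : G → ℂ // IsCc c} => ρ c.1) ν0
    {ρ : MeasF G | ∃ t : G, ρ = translateM t μ0}).2 hgoal
end
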